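/- arXiv:2006.10330 — 7 statements merged into one kernel-verified Lean document; each statement's English description precedes it below -/
import Mathlib

section
/- Let σ: ℝ → ℝ be an arbitrary function applied componentwise. Let T > 0, let θ1: [0,T] → ℝ^{d×d'} and b1: [0,T] → ℝ^d be continuous, and let θ2: [0,T] → ℝ^{d'×d} and b2: [0,T] → ℝ^{d'} be continuously differentiable. Suppose q: [0,T] → ℝ^d is differentiable and satisfies q̇(t) = θ1(t) σ(θ2(t) q(t) + b2(t)) + b1(t) for all t. Define v(t) := θ2(t) q(t) + b2(t). Then v is differentiable and the pair (q, v) satisfies the UpDown model with parameters θ1, b1, θ̂2(t) := θ2'(t), b̂2(t) := b2'(t) + θ2(t) b1(t), θ3(t) := θ2(t) θ1(t); that is, q̇(t) = θ1(t) σ(v(t)) + b1(t) and v̇(t) = θ̂2(t) q(t) + b̂2(t) + θ3(t) σ(v(t)) for all t ∈ [0,T], with v(0) = θ2(0) q(0) + b2(0). -/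
open Set

/-- Matrix-vector product for matrices represented as functions. -/
def mvec {m n : ℕ} (A : Fin m → Fin n → ℝ) (x : Fin n → ℝ) : Fin m → ℝ :=
  fun i => ∑ j, A i j * x j

/-- Matrix-matrix product for matrices represented as functions. -/
def mmul {m n p : ℕ} (A : Fin m → Fin n → ℝ) (B : Fin n → Fin p → ℝ) :
    Fin m → Fin p → ℝ :=
  fun i j => ∑ l, A i l * B l j

/-- From the single-hidden-layer ODE to the `UpDown` model: if `q` solves
`q̇ = θ1 σ(θ2 q + b2) + b1` on `[0,T]`, then `v := θ2 q + b2` is differentiable and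
`(q, v)` solves the `UpDown` model with parameters `θ1, b1, θ2', b2' + θ2 b1, θ2 θ1`
and initial condition `v 0 = θ2(0) q(0) + b2(0)`. -/
theorem single_hidden_layer_to_updown
    (d d' : ℕ) (σ : ℝ → ℝ) (T : ℝ) (hT : 0 < T)
    (θ1 : ℝ → Fin d → Fin d' → ℝ) (b1 : ℝ → Fin d → ℝ)
    (θ2 : ℝ → Fin d' → Fin d → ℝ) (b2 : ℝ → Fin d' → ℝ)
    (θ2' : ℝ → Fin d' → Fin d → ℝ) (b2' : ℝ → Fin d' → ℝ)
    (hθ1 : ContinuousOn θ1 (Icc 0 T)) (hb1 : ContinuousOn b1 (Icc 0 T))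
    (hθ2 : ∀ t ∈ Icc (0:ℝ) T, HasDerivWithinAt θ2 (θ2' t) (Icc 0 T) t)
    (hθ2' : ContinuousOn θ2' (Icc 0 T))
    (hb2 : ∀ t ∈ Icc (0:ℝ) T, HasDerivWithinAt b2 (b2' t) (Icc 0 T) t)
    (hb2' : ContinuousOn b2' (Icc 0 T))
    (q : ℝ → Fin d → ℝ)
    (hq : ∀ t ∈ Icc (0:ℝ) T,
      HasDerivWithinAt q
        (mvec (θ1 t) (fun i => σ ((mvec (θ2 t) (q t) + b2 t) i)) + b1 t)
        (Icc 0 T) t)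
    (v : ℝ → Fin d' → ℝ)
    (hv : v = fun t => mvec (θ2 t) (q t) + b2 t) :
    (∀ t ∈ Icc (0:ℝ) T,
      HasDerivWithinAt q (mvec (θ1 t) (fun i => σ (v t i)) + b1 t) (Icc 0 T) t) ∧
    (∀ t ∈ Icc (0:ℝ) T,
      HasDerivWithinAt v
        (mvec (θ2' t) (q t) + (b2' t + mvec (θ2 t) (b1 t))
          + mvec (mmul (θ2 t) (θ1 t)) (fun i => σ (v t i)))
        (Icc 0 T) t) ∧
    v 0 = mvec (θ2 0) (q 0) + b2 0 := by
  subst hv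
  refine ⟨fun t ht => hq t ht, fun t ht => ?_, rfl⟩
  set q' : Fin d → ℝ :=
    mvec (θ1 t) (fun i => σ ((mvec (θ2 t) (q t) + b2 t) i)) + b1 t with hq'def
  have hq' : HasDerivWithinAt q q' (Icc 0 T) t := hq t ht
  rw [hasDerivWithinAt_pi]
  intro i
  have hqj : ∀ j, HasDerivWithinAt (fun s => q s j) (q' j) (Icc 0 T) t :=
    fun j => hasDerivWithinAt_pi.mp hq' j
  have hθ2ij : ∀ j, HasDerivWithinAt (fun s => θ2 s i j) (θ2' t i j) (Icc 0 T) t :=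
    fun j => hasDerivWithinAt_pi.mp (hasDerivWithinAt_pi.mp (hθ2 t ht) i) j
  have hb2i : HasDerivWithinAt (fun s => b2 s i) (b2' t i) (Icc 0 T) t :=
    hasDerivWithinAt_pi.mp (hb2 t ht) i
  have hsum : HasDerivWithinAt (fun s => (∑ j, θ2 s i j * q s j) + b2 s i)
      ((∑ j, (θ2' t i j * q t j + θ2 t i j * q' j)) + b2' t i) (Icc 0 T) t := by
    exact (HasDerivWithinAt.fun_sum fun j _ => (hθ2ij j).mul (hqj j)).add hb2i
  have heq : (∑ j, (θ2' t i j * q t j + θ2 t i j * q' j)) + b2' t i =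
      (mvec (θ2' t) (q t) + (b2' t + mvec (θ2 t) (b1 t))
        + mvec (mmul (θ2 t) (θ1 t))
          (fun k => σ ((mvec (θ2 t) (q t) + b2 t) k))) i := by
    simp only [hq'def, mvec, mmul, Pi.add_apply, Finset.sum_add_distrib,
      Finset.mul_sum, Finset.sum_mul, mul_add]
    rw [Finset.sum_comm]
    simp only [mul_assoc]
    ring
  rw [← heq]
  exact hsum.congr_deriv rfl
end

section
/- Let σ: ℝ → ℝ be an arbitrary function applied componentwise. Let T > 0, let θ1: [0,T] → ℝ^{d×d'} and b1: [0,T] → ℝ^d be continuous, and let θ2: [0,T] → ℝ^{d'×d} and b2: [0,T] → ℝ^{d'} be continuously differentiable. Suppose (q, v): [0,T] → ℝ^d × ℝ^{d'} is differentiable and satisfies the UpDown model q̇(t) = θ1(t) σ(v(t)) + b1(t), v̇(t) = θ2'(t) q(t) + (b2'(t) + θ2(t) b1(t)) + θ2(t) θ1(t) σ(v(t)) with initial condition v(0) = θ2(0) q(0) + b2(0). Then v(t) = θ2(t) q(t) + b2(t) for all t ∈ [0,T], and consequently q satisfies the single-hidden-layer ODE q̇(t) = θ1(t) σ(θ2(t)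 q(t) + b2(t)) + b1(t) on [0,T]. -/
open Set

/-- From the `UpDown` model back to the single-hidden-layer ODE: if `(q, v)` solves the
`UpDown` model `q̇ = θ1 σ(v) + b1`, `v̇ = θ2' q + (b2' + θ2 b1) + θ2 θ1 σ(v)` on `[0,T]`
with initial condition `v 0 = θ2(0) q(0) + b2(0)`, then `v(t) = θ2(t) q(t) + b2(t)` for
all `t ∈ [0,T]` and consequently `q` solves `q̇ = θ1 σ(θ2 q + b2) + b1` on `[0,T]`. -/
theorem updown_to_single_hidden_layer
    (d d' : ℕ) (σ : ℝ → ℝ) (T : ℝ) (hT : 0 < T)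
    (θ1 : ℝ → Fin d → Fin d' → ℝ) (b1 : ℝ → Fin d → ℝ)
    (θ2 : ℝ → Fin d' → Fin d → ℝ) (b2 : ℝ → Fin d' → ℝ)
    (θ2' : ℝ → Fin d' → Fin d → ℝ) (b2' : ℝ → Fin d' → ℝ)
    (hθ1 : ContinuousOn θ1 (Icc 0 T)) (hb1 : ContinuousOn b1 (Icc 0 T))
    (hθ2 : ∀ t ∈ Icc (0:ℝ) T, HasDerivWithinAt θ2 (θ2' t) (Icc 0 T) t)
    (hθ2' : ContinuousOn θ2' (Icc 0 T))
    (hb2 : ∀ t ∈ Icc (0:ℝ) T, HasDerivWithinAt b2 (b2' t) (Icc 0 T) t)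
    (hb2' : ContinuousOn b2' (Icc 0 T))
    (q : ℝ → Fin d → ℝ) (v : ℝ → Fin d' → ℝ)
    (hq : ∀ t ∈ Icc (0:ℝ) T,
      HasDerivWithinAt q (mvec (θ1 t) (fun i => σ (v t i)) + b1 t) (Icc 0 T) t)
    (hvode : ∀ t ∈ Icc (0:ℝ) T,
      HasDerivWithinAt v
        (mvec (θ2' t) (q t) + (b2' t + mvec (θ2 t) (b1 t))
          + mvec (mmul (θ2 t) (θ1 t)) (fun i => σ (v t i)))
        (Icc 0 T) t)
    (hv0 : v 0 = mvec (θ2 0) (q 0) + b2 0) :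
    (∀ t ∈ Icc (0:ℝ) T, v t = mvec (θ2 t) (q t) + b2 t) ∧
    (∀ t ∈ Icc (0:ℝ) T,
      HasDerivWithinAt q
        (mvec (θ1 t) (fun i => σ ((mvec (θ2 t) (q t) + b2 t) i)) + b1 t)
        (Icc 0 T) t) := by
  have key : ∀ t ∈ Icc (0:ℝ) T,
      HasDerivWithinAt (fun s => mvec (θ2 s) (q s) + b2 s)
        (mvec (θ2' t) (q t) + (b2' t + mvec (θ2 t) (b1 t))
          + mvec (mmul (θ2 t) (θ1 t)) (fun i => σ (v t i))) (Icc 0 T) t := by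
    intro t ht
    have hmv : HasDerivWithinAt (fun s => mvec (θ2 s) (q s))
        (fun i => ∑ j, (θ2' t i j * q t j
          + θ2 t i j * ((mvec (θ1 t) (fun i => σ (v t i)) + b1 t) j))) (Icc 0 T) t := by
      rw [hasDerivWithinAt_pi]
      intro i
      exact HasDerivWithinAt.fun_sum fun j _ =>
        (hasDerivWithinAt_pi.1 (hasDerivWithinAt_pi.1 (hθ2 t ht) i) j).mul
          (hasDerivWithinAt_pi.1 (hq t ht) j)
    have := hmv.add (hb2 t ht)
    refine this.congr_deriv ?_
    funext i
    simp only [mvec, mmul, Pi.add_apply, Finset.mul_sum, Finset.sum_add_distrib,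
      mul_add, Finset.sum_mul, mul_assoc]
    rw [Finset.sum_comm (f := fun x l => θ2 t i l * (θ1 t l x * σ (v t x)))]
    ring
  have hg : ∀ t ∈ Icc (0:ℝ) T,
      HasDerivWithinAt (fun s => v s - (mvec (θ2 s) (q s) + b2 s)) 0 (Icc 0 T) t := by
    intro t ht
    have h := (hvode t ht).sub (key t ht)
    rw [sub_self] at h
    exact h
  have hcont : ContinuousOn (fun s => v s - (mvec (θ2 s) (q s) + b2 s)) (Icc 0 T) :=
    fun t ht => (hg t ht).continuousWithinAt
  have hconst : ∀ t ∈ Icc (0:ℝ) T, v t = mvec (θ2 t) (q t) + b2 t := by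
    intro t ht
    have := constant_of_has_deriv_right_zero hcont (fun x hx =>
      (hg x ⟨hx.1, hx.2.le⟩).mono_of_mem_nhdsWithin (Icc_mem_nhdsGE_of_mem hx)) t ht
    have h0 : v 0 - (mvec (θ2 0) (q 0) + b2 0) = 0 := by rw [hv0]; simp
    rw [h0] at this
    exact sub_eq_zero.1 this
  refine ⟨hconst, fun t ht => ?_⟩
  have := hq t ht
  rwa [hconst t ht] at this
end

section
/- Let σ: ℝ → ℝ be Lipschitz and applied componentwise. Let 0 = t_0 < t_1 < ... < t_k = 1 be a partition of [0,1], and suppose θ1: [0,1] → ℝ^{d×d'}, b1: [0,1] → ℝ^d are continuous on each interval [t_{i-1}, t_i) and θ2: [0,1] → ℝ^{d'×d}, b2: [0,1] → ℝ^{d'} are continuously differentiable on each interval [t_{i-1}, t_i) (i = 1, ..., k), with one-sided limits at the breakpoints. Let φ(t, x) denote the (Carathéodory) flow of the single-hidden-layer vector field f(t, x) = θ1(t) σ(θ2(t) x + b2(t)) + b1(t), which exists and is unique on [0,1] for every x ∈ ℝ^d. Then there exist a hidden dimension D = k·d', piecewise-continuous parameters θ̃1: [0,1] → ℝ^{d×D},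 θ̃2: [0,1] → ℝ^{D×d}, θ̃3: [0,1] → ℝ^{D×D}, b̃1: [0,1] → ℝ^d, b̃2: [0,1] → ℝ^{D}, and an affine map x ↦ Θ x + β (Θ ∈ ℝ^{D×d}, β ∈ ℝ^{D}) such that for every x ∈ ℝ^d the solution (q, v) of the UpDown model with these parameters and initial conditions q(0) = x, v(0) = Θ x + β satisfies q(t) = φ(t, x) for all t ∈ [0,1]. -/
open Set

section Aux
variable {k : ℕ} (t : Fin (k+1) → ℝ)

noncomputable def clampI (i : Fin k) (τ : ℝ) : ℝ := max (t i.castSucc) (min τ (t i.succ))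

noncomputable def indI (i : Fin k) (τ : ℝ) : ℝ :=
  if τ ∈ Ico (t i.castSucc) (t i.succ) then 1 else 0

variable {t}

lemma clampI_mem (hm : StrictMono t) (i : Fin k) (τ : ℝ) :
    clampI t i τ ∈ Icc (t i.castSucc) (t i.succ) := by
  have h : t i.castSucc ≤ t i.succ := (hm (Fin.castSucc_lt_succ : i.castSucc < i.succ)).le
  exact ⟨le_max_left _ _, max_le h (min_le_right _ _)⟩

lemma clampI_eq_self {i : Fin k} {τ : ℝ}
    (hτ : τ ∈ Ico (t i.castSucc) (t i.succ)) : clampI t i τ = τ := by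
  have h1 : min τ (t i.succ) = τ := min_eq_left hτ.2.le
  rw [clampI, h1, max_eq_right hτ.1]

lemma indI_eq_zero (hm : StrictMono t) {p i : Fin k} {τ : ℝ}
    (hτ : τ ∈ Ico (t p.castSucc) (t p.succ)) (hne : i ≠ p) : indI t i τ = 0 := by
  rw [indI, if_neg]
  intro hmem
  rcases lt_or_gt_of_ne hne with h | h
  · have : t i.succ ≤ t p.castSucc := hm.monotone (Fin.succ_le_castSucc_iff.mpr h)
    exact absurd hτ.1 (not_le.mpr (hmem.2.trans_le this))
  · have : t p.succ ≤ t i.castSucc := hm.monotone (Fin.succ_le_castSucc_iff.mpr h)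
    exact absurd hmem.1 (not_le.mpr (hτ.2.trans_le this))

lemma indI_eq_one {i : Fin k} {τ : ℝ}
    (hτ : τ ∈ Ico (t i.castSucc) (t i.succ)) : indI t i τ = 1 := if_pos hτ

lemma clampI_const (hm : StrictMono t) {p i : Fin k} (hne : i ≠ p) {τ τ' : ℝ}
    (hτ : τ ∈ Ico (t p.castSucc) (t p.succ)) (hτ' : τ' ∈ Ico (t p.castSucc) (t p.succ)) :
    clampI t i τ = clampI t i τ' := by
  have key : ∀ s ∈ Ico (t p.castSucc) (t p.succ),
      clampI t i s = (if i < p then t i.succ else t i.castSucc) := by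
    intro s hs
    rcases lt_or_gt_of_ne hne with h | h
    · have hle : t i.succ ≤ t p.castSucc := hm.monotone (Fin.succ_le_castSucc_iff.mpr h)
      have h1 : min s (t i.succ) = t i.succ := min_eq_right (hle.trans hs.1)
      have h2 : t i.castSucc ≤ t i.succ := (hm (Fin.castSucc_lt_succ : i.castSucc < i.succ)).le
      rw [if_pos h, clampI, h1, max_eq_right h2]
    · have hle : t p.succ ≤ t i.castSucc := hm.monotone (Fin.succ_le_castSucc_iff.mpr h)
      have hs2 : s ≤ t i.castSucc := hs.2.le.trans hle
      have h1 : min s (t i.succ) = s :=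
        min_eq_left (hs2.trans (hm (Fin.castSucc_lt_succ : i.castSucc < i.succ)).le)
      rw [if_neg (not_lt.mpr h.le), clampI, h1, max_eq_left hs2]
  rw [key τ hτ, key τ' hτ']

lemma hasDerivWithinAt_clampI (hm : StrictMono t) {p : Fin k} (i : Fin k) {τ : ℝ}
    (hτ : τ ∈ Ico (t p.castSucc) (t p.succ)) :
    HasDerivWithinAt (clampI t i) (indI t i τ) (Ico (t p.castSucc) (t p.succ)) τ := by
  by_cases hip : i = p
  · subst hip
    rw [indI_eq_one hτ]
    exact (hasDerivWithinAt_id τ _).congr (fun s hs => clampI_eq_self hs) (clampI_eq_self hτ)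
  · rw [indI_eq_zero hm hτ hip]
    exact (hasDerivWithinAt_const τ _ (clampI t i τ)).congr
      (fun s hs => clampI_const hm hip hs hτ) rfl

lemma continuous_clampI (i : Fin k) : Continuous (clampI t i) :=
  continuous_const.max (continuous_id.min continuous_const)

lemma contOn_apply1 {ι β : Type*} [TopologicalSpace β] {f : ℝ → ι → β} {s : Set ℝ}
    (h : ContinuousOn f s) (i : ι) :
    ContinuousOn (fun τ => f τ i) s :=
  (continuous_apply i).comp_continuousOn h

lemma contOn_apply2 {ι κ β : Type*} [TopologicalSpace β] {f : ℝ → ι → κ → β} {s : Set ℝ}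
    (h : ContinuousOn f s) (i : ι) (j : κ) :
    ContinuousOn (fun τ => f τ i j) s :=
  contOn_apply1 (contOn_apply1 h i) j

end Aux

/-- The flow of a single-hidden-layer vector field with piecewise regular (continuous
resp. C¹, with one-sided limits at the breakpoints) time-dependent parameters can be
realized exactly by an `UpDown` model with hidden dimension `D = k·d'`,
piecewise-continuous parameters, and an affine map initializing the hidden state. -/
theorem single_hidden_layer_flow_realized_by_updown
    (d d' k : ℕ) (hk : 0 < k)
    (σ : ℝ → ℝ) (Kσ : NNReal) (hσ : LipschitzWith Kσ σ)
    -- partition 0 = t₀ < t₁ < … < t_k = 1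
    (t : Fin (k+1) → ℝ) (ht0 : t 0 = 0) (ht1 : t (Fin.last k) = 1)
    (htmono : StrictMono t)
    (θ1 : ℝ → Fin d → Fin d' → ℝ) (b1 : ℝ → Fin d → ℝ)
    (θ2 : ℝ → Fin d' → Fin d → ℝ) (b2 : ℝ → Fin d' → ℝ)
    -- θ1, b1 continuous on each [tᵢ₋₁, tᵢ) with one-sided limits at the breakpoints
    (hθ1 : ∀ i : Fin k, ∃ g : ℝ → Fin d → Fin d' → ℝ,
      ContinuousOn g (Icc (t i.castSucc) (t i.succ)) ∧
      EqOn θ1 g (Ico (t i.castSucc) (t i.succ)))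
    (hb1 : ∀ i : Fin k, ∃ g : ℝ → Fin d → ℝ,
      ContinuousOn g (Icc (t i.castSucc) (t i.succ)) ∧
      EqOn b1 g (Ico (t i.castSucc) (t i.succ)))
    -- θ2, b2 continuously differentiable on each [tᵢ₋₁, tᵢ) with one-sided limits
    (hθ2 : ∀ i : Fin k, ∃ g : ℝ → Fin d' → Fin d → ℝ,
      ContDiffOn ℝ 1 g (Icc (t i.castSucc) (t i.succ)) ∧
      EqOn θ2 g (Ico (t i.castSucc) (t i.succ)))
    (hb2 : ∀ i : Fin k, ∃ g : ℝ → Fin d' → ℝ,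
      ContDiffOn ℝ 1 g (Icc (t i.castSucc) (t i.succ)) ∧
      EqOn b2 g (Ico (t i.castSucc) (t i.succ)))
    -- φ is the flow of the single-hidden-layer vector field
    (φ : (Fin d → ℝ) → ℝ → Fin d → ℝ)
    (hφ0 : ∀ x, φ x 0 = x)
    (hφcont : ∀ x, ContinuousOn (φ x) (Icc 0 1))
    (hφode : ∀ x, ∀ i : Fin k, ∀ s ∈ Ico (t i.castSucc) (t i.succ),
      HasDerivWithinAt (φ x)
        (mvec (θ1 s) (fun l => σ ((mvec (θ2 s) (φ x s) + b2 s) l)) + b1 s)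
        (Ico (t i.castSucc) (t i.succ)) s)
    -- the flow is unique
    (hφuniq : ∀ x, ∀ ψ : ℝ → Fin d → ℝ, ψ 0 = x → ContinuousOn ψ (Icc 0 1) →
      (∀ i : Fin k, ∀ s ∈ Ico (t i.castSucc) (t i.succ),
        HasDerivWithinAt ψ
          (mvec (θ1 s) (fun l => σ ((mvec (θ2 s) (ψ s) + b2 s) l)) + b1 s)
          (Ico (t i.castSucc) (t i.succ)) s) →
      EqOn ψ (φ x) (Icc 0 1)) :
    -- there is an UpDown model with hidden dimension k·d' realizing the flow
    ∃ (m : ℕ) (s : Fin (m+1) → ℝ), s 0 = 0 ∧ s (Fin.last m) = 1 ∧ StrictMono s ∧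
    ∃ (θt1 : ℝ → Fin d → Fin (k * d') → ℝ) (θt2 : ℝ → Fin (k * d') → Fin d → ℝ)
      (θt3 : ℝ → Fin (k * d') → Fin (k * d') → ℝ)
      (bt1 : ℝ → Fin d → ℝ) (bt2 : ℝ → Fin (k * d') → ℝ)
      (Θ : Fin (k * d') → Fin d → ℝ) (β : Fin (k * d') → ℝ),
      -- the UpDown parameters are piecewise continuous
      (∀ i : Fin m,
        ContinuousOn θt1 (Ico (s i.castSucc) (s i.succ)) ∧
        ContinuousOn θt2 (Ico (s i.castSucc) (s i.succ)) ∧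
        ContinuousOn θt3 (Ico (s i.castSucc) (s i.succ)) ∧
        ContinuousOn bt1 (Ico (s i.castSucc) (s i.succ)) ∧
        ContinuousOn bt2 (Ico (s i.castSucc) (s i.succ))) ∧
      -- for every initial value the UpDown solution reproduces the flow
      ∀ x : Fin d → ℝ, ∃ (q : ℝ → Fin d → ℝ) (v : ℝ → Fin (k * d') → ℝ),
        q 0 = x ∧ v 0 = mvec Θ x + β ∧
        ContinuousOn q (Icc 0 1) ∧ ContinuousOn v (Icc 0 1) ∧
        (∀ i : Fin m, ∀ τ ∈ Ico (s i.castSucc) (s i.succ),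
          HasDerivWithinAt q (mvec (θt1 τ) (fun l => σ (v τ l)) + bt1 τ)
            (Ico (s i.castSucc) (s i.succ)) τ ∧
          HasDerivWithinAt v
            (mvec (θt2 τ) (q τ) + bt2 τ + mvec (θt3 τ) (fun l => σ (v τ l)))
            (Ico (s i.castSucc) (s i.succ)) τ) ∧
        ∀ τ ∈ Icc (0:ℝ) 1, q τ = φ x τ := by

  classical
  choose g1 hg1c hg1e using hθ1
  choose gb1 hgb1c hgb1e using hb1
  choose g2 hg2c hg2e using hθ2
  choose gb2 hgb2c hgb2e using hb2
  have hlt : ∀ i : Fin k, t i.castSucc < t i.succ := fun i => htmono (Fin.castSucc_lt_succ : i.castSucc < i.succ)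
  set e : Fin k × Fin d' ≃ Fin (k * d') := finProdFinEquiv with he
  -- block structure helpers
  set G2 : Fin k → ℝ → Fin d' → Fin d → ℝ := fun i τ => g2 i (clampI t i τ) with hG2
  set B2 : Fin k → ℝ → Fin d' → ℝ := fun i τ => gb2 i (clampI t i τ) with hB2
  set D2 : Fin k → ℝ → Fin d' → Fin d → ℝ :=
    fun i τ => derivWithin (g2 i) (Icc (t i.castSucc) (t i.succ)) τ with hD2
  set Db2 : Fin k → ℝ → Fin d' → ℝ :=
    fun i τ => derivWithin (gb2 i) (Icc (t i.castSucc) (t i.succ)) τ with hDb2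
  -- the UpDown parameters
  set Θt1 : ℝ → Fin d → Fin (k * d') → ℝ :=
    fun τ r l => indI t (e.symm l).1 τ * θ1 τ r (e.symm l).2 with hΘt1
  set Θt2 : ℝ → Fin (k * d') → Fin d → ℝ :=
    fun τ l r => indI t (e.symm l).1 τ * D2 (e.symm l).1 τ (e.symm l).2 r with hΘt2
  set Θt3 : ℝ → Fin (k * d') → Fin (k * d') → ℝ :=
    fun τ l l' => indI t (e.symm l').1 τ *
      ∑ r, G2 (e.symm l).1 τ (e.symm l).2 r * θ1 τ r (e.symm l').2 with hΘt3
  set Bt2 : ℝ → Fin (k * d') → ℝ :=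
    fun τ l => indI t (e.symm l).1 τ * Db2 (e.symm l).1 τ (e.symm l).2 +
      ∑ r, G2 (e.symm l).1 τ (e.symm l).2 r * b1 τ r with hBt2
  set Θ0 : Fin (k * d') → Fin d → ℝ := fun l r => G2 (e.symm l).1 0 (e.symm l).2 r with hΘ0
  set β0 : Fin (k * d') → ℝ := fun l => B2 (e.symm l).1 0 (e.symm l).2 with hβ0
  have hG2cont : ∀ i, Continuous (G2 i) := fun i =>
    (hg2c i).continuousOn.comp_continuous (continuous_clampI i) (clampI_mem htmono i)
  have hB2cont : ∀ i, Continuous (B2 i) := fun i =>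
    (hgb2c i).continuousOn.comp_continuous (continuous_clampI i) (clampI_mem htmono i)
  refine ⟨k, t, ht0, ht1, htmono, Θt1, Θt2, Θt3, b1, Bt2, Θ0, β0, ?_, ?_⟩
  · -- piecewise continuity of the parameters
    intro p
    have hsub : Ico (t p.castSucc) (t p.succ) ⊆ Icc (t p.castSucc) (t p.succ) :=
      Ico_subset_Icc_self
    have hb1cont : ContinuousOn b1 (Ico (t p.castSucc) (t p.succ)) :=
      ContinuousOn.congr ((hgb1c p).mono hsub) (hgb1e p)
    refine ⟨?_, ?_, ?_, ?_, ?_⟩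
    · rw [continuousOn_pi]; intro r; rw [continuousOn_pi]; intro l
      by_cases hip : (e.symm l).1 = p
      · refine ContinuousOn.congr (contOn_apply2 ((hg1c p).mono hsub) r (e.symm l).2) ?_
        intro τ hτ
        simp only [hΘt1, hip, indI_eq_one hτ, one_mul, hg1e p hτ]
      · refine ContinuousOn.congr (continuousOn_const (c := (0:ℝ))) ?_
        intro τ hτ
        simp only [hΘt1, indI_eq_zero htmono hτ hip, zero_mul]
    · rw [continuousOn_pi]; intro l; rw [continuousOn_pi]; intro r
      by_cases hip : (e.symm l).1 = p
      · refine ContinuousOn.congr (contOn_apply2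
          (((hg2c p).continuousOn_derivWithin (uniqueDiffOn_Icc (hlt p)) le_rfl).mono hsub)
          (e.symm l).2 r) ?_
        intro τ hτ
        simp only [hΘt2, hip, indI_eq_one hτ, one_mul, hD2]
      · refine ContinuousOn.congr (continuousOn_const (c := (0:ℝ))) ?_
        intro τ hτ
        simp only [hΘt2, indI_eq_zero htmono hτ hip, zero_mul]
    · rw [continuousOn_pi]; intro l; rw [continuousOn_pi]; intro l'
      by_cases hip : (e.symm l').1 = p
      · refine ContinuousOn.congr (continuousOn_finset_sum Finset.univ
          (fun r _ => (contOn_apply2 (hG2cont (e.symm l).1).continuousOn (e.symm l).2 r).mul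
            (contOn_apply2 ((hg1c p).mono hsub) r (e.symm l').2))) ?_
        intro τ hτ
        simp only [hΘt3, hip, indI_eq_one hτ, one_mul, hg1e p hτ, Pi.mul_apply]
      · refine ContinuousOn.congr (continuousOn_const (c := (0:ℝ))) ?_
        intro τ hτ
        simp only [hΘt3, indI_eq_zero htmono hτ hip, zero_mul]
    · exact hb1cont
    · rw [continuousOn_pi]; intro l
      refine ContinuousOn.add ?_ ?_
      · by_cases hip : (e.symm l).1 = p
        · refine ContinuousOn.congr (contOn_apply1
            (((hgb2c p).continuousOn_derivWithin (uniqueDiffOn_Icc (hlt p)) le_rfl).mono hsub)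
            (e.symm l).2) ?_
          intro τ hτ
          simp only [hip, indI_eq_one hτ, one_mul, hDb2]
        · refine ContinuousOn.congr (continuousOn_const (c := (0:ℝ))) ?_
          intro τ hτ
          simp only [indI_eq_zero htmono hτ hip, zero_mul]
      · exact continuousOn_finset_sum Finset.univ
          (fun r _ => (contOn_apply2 (hG2cont (e.symm l).1).continuousOn (e.symm l).2 r).mul
            (contOn_apply1 hb1cont r))
  · -- realization of the flow
    intro x
    set V : ℝ → Fin (k * d') → ℝ := fun τ l =>
      (∑ r, G2 (e.symm l).1 τ (e.symm l).2 r * φ x τ r) + B2 (e.symm l).1 τ (e.symm l).2 with hV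
    refine ⟨φ x, V, hφ0 x, ?_, hφcont x, ?_, ?_, fun τ _ => rfl⟩
    · funext l
      simp only [hV, hΘ0, hβ0, mvec, Pi.add_apply, hφ0 x]
    · rw [continuousOn_pi]; intro l
      refine ContinuousOn.add ?_ ?_
      · exact continuousOn_finset_sum Finset.univ
          (fun r _ => (contOn_apply2 (hG2cont (e.symm l).1).continuousOn (e.symm l).2 r).mul
            (contOn_apply1 (hφcont x) r))
      · exact contOn_apply1 (hB2cont (e.symm l).1).continuousOn (e.symm l).2
    · intro p τ hτ
      have hVp : ∀ c : Fin d', V τ (e (p, c)) = (mvec (θ2 τ) (φ x τ) + b2 τ) c := by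
        intro c
        simp only [hV, hG2, hB2, Equiv.symm_apply_apply, clampI_eq_self hτ, mvec, Pi.add_apply]
        rw [← hg2e p hτ, ← hgb2e p hτ]
      have hsum_red : ∀ F : Fin k → Fin d' → ℝ,
          (∑ l' : Fin (k * d'), indI t (e.symm l').1 τ * F (e.symm l').1 (e.symm l').2) =
            ∑ c, F p c := by
        intro F
        rw [← Equiv.sum_comp e (fun l' => indI t (e.symm l').1 τ * F (e.symm l').1 (e.symm l').2)]
        simp only [Equiv.symm_apply_apply]
        rw [Fintype.sum_prod_type, Finset.sum_eq_single p]
        · simp [indI_eq_one hτ]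
        · intro j _ hj; simp [indI_eq_zero htmono hτ hj]
        · intro h; exact absurd (Finset.mem_univ p) h
      constructor
      · -- q equation
        have key : mvec (Θt1 τ) (fun l => σ (V τ l)) =
            mvec (θ1 τ) (fun l => σ ((mvec (θ2 τ) (φ x τ) + b2 τ) l)) := by
          funext r
          show (∑ l, Θt1 τ r l * σ (V τ l)) = _
          have step : ∀ l : Fin (k * d'), Θt1 τ r l * σ (V τ l) =
              indI t (e.symm l).1 τ *
                (fun j c => θ1 τ r c * σ (V τ (e (j, c)))) (e.symm l).1 (e.symm l).2 := by
            intro l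
            simp only [hΘt1, Prod.mk.eta, Equiv.apply_symm_apply, mul_assoc]
          rw [Finset.sum_congr rfl (fun l _ => step l),
            hsum_red (fun j c => θ1 τ r c * σ (V τ (e (j, c))))]
          simp only [hVp, mvec]
        show HasDerivWithinAt (φ x) (mvec (Θt1 τ) (fun l => σ (V τ l)) + b1 τ) _ τ
        rw [key]
        exact hφode x p τ hτ
      · -- v equation
        rw [hasDerivWithinAt_pi]
        intro l
        have hG2d : HasDerivWithinAt (G2 (e.symm l).1)
            (indI t (e.symm l).1 τ • D2 (e.symm l).1 τ) (Ico (t p.castSucc) (t p.succ)) τ := by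
          set i := (e.symm l).1
          have hdiff : HasDerivWithinAt (g2 i)
              (derivWithin (g2 i) (Icc (t i.castSucc) (t i.succ)) (clampI t i τ))
              (Icc (t i.castSucc) (t i.succ)) (clampI t i τ) :=
            (((hg2c i).differentiableOn one_ne_zero) _ (clampI_mem htmono i τ)).hasDerivWithinAt
          have hcomp := hdiff.scomp τ (hasDerivWithinAt_clampI htmono i hτ)
            (fun s _ => clampI_mem htmono i s)
          by_cases hmem : τ ∈ Ico (t i.castSucc) (t i.succ)
          · rw [clampI_eq_self hmem] at hcomp; exact hcomp
          · have h0 : indI t i τ = 0 := by rw [indI, if_neg hmem]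
            rw [h0, zero_smul]
            rw [h0, zero_smul] at hcomp
            exact hcomp
        have hB2d : HasDerivWithinAt (B2 (e.symm l).1)
            (indI t (e.symm l).1 τ • Db2 (e.symm l).1 τ) (Ico (t p.castSucc) (t p.succ)) τ := by
          set i := (e.symm l).1
          have hdiff : HasDerivWithinAt (gb2 i)
              (derivWithin (gb2 i) (Icc (t i.castSucc) (t i.succ)) (clampI t i τ))
              (Icc (t i.castSucc) (t i.succ)) (clampI t i τ) :=
            (((hgb2c i).differentiableOn one_ne_zero) _ (clampI_mem htmono i τ)).hasDerivWithinAt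
          have hcomp := hdiff.scomp τ (hasDerivWithinAt_clampI htmono i hτ)
            (fun s _ => clampI_mem htmono i s)
          by_cases hmem : τ ∈ Ico (t i.castSucc) (t i.succ)
          · rw [clampI_eq_self hmem] at hcomp; exact hcomp
          · have h0 : indI t i τ = 0 := by rw [indI, if_neg hmem]
            rw [h0, zero_smul]
            rw [h0, zero_smul] at hcomp
            exact hcomp
        have hqd := hφode x p τ hτ
        have main : HasDerivWithinAt (fun y => V y l)
            ((∑ r, ((indI t (e.symm l).1 τ • D2 (e.symm l).1 τ) (e.symm l).2 r * φ x τ r +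
              G2 (e.symm l).1 τ (e.symm l).2 r *
                (mvec (θ1 τ) (fun j => σ ((mvec (θ2 τ) (φ x τ) + b2 τ) j)) + b1 τ) r)) +
              (indI t (e.symm l).1 τ • Db2 (e.symm l).1 τ) (e.symm l).2)
            (Ico (t p.castSucc) (t p.succ)) τ := by
          have h1 : ∀ r : Fin d, HasDerivWithinAt (fun y => G2 (e.symm l).1 y (e.symm l).2 r)
              ((indI t (e.symm l).1 τ • D2 (e.symm l).1 τ) (e.symm l).2 r)
              (Ico (t p.castSucc) (t p.succ)) τ :=
            fun r => hasDerivWithinAt_pi.1 (hasDerivWithinAt_pi.1 hG2d (e.symm l).2) r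
          have h2 : ∀ r : Fin d, HasDerivWithinAt (fun y => φ x y r)
              ((mvec (θ1 τ) (fun j => σ ((mvec (θ2 τ) (φ x τ) + b2 τ) j)) + b1 τ) r)
              (Ico (t p.castSucc) (t p.succ)) τ :=
            fun r => hasDerivWithinAt_pi.1 hqd r
          have h3 : HasDerivWithinAt (fun y => B2 (e.symm l).1 y (e.symm l).2)
              ((indI t (e.symm l).1 τ • Db2 (e.symm l).1 τ) (e.symm l).2)
              (Ico (t p.castSucc) (t p.succ)) τ :=
            hasDerivWithinAt_pi.1 hB2d (e.symm l).2
          exact (HasDerivWithinAt.fun_sum (fun r _ => (h1 r).mul (h2 r))).add h3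
        refine main.congr_deriv (Eq.symm ?_)
        simp only [mvec, Pi.add_apply, Pi.smul_apply, smul_eq_mul, hΘt2, hBt2, hΘt3]
        have step3 : ∀ l' : Fin (k * d'),
            (indI t (e.symm l').1 τ *
              ∑ r, G2 (e.symm l).1 τ (e.symm l).2 r * θ1 τ r (e.symm l').2) * σ (V τ l') =
            indI t (e.symm l').1 τ *
              (fun j c' => (∑ r, G2 (e.symm l).1 τ (e.symm l).2 r * θ1 τ r c') *
                σ (V τ (e (j, c')))) (e.symm l').1 (e.symm l').2 := by
          intro l'
          simp only [Prod.mk.eta, Equiv.apply_symm_apply, mul_assoc]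
        rw [Finset.sum_congr rfl (fun l' _ => step3 l'),
          hsum_red (fun j c' => (∑ r, G2 (e.symm l).1 τ (e.symm l).2 r * θ1 τ r c') *
            σ (V τ (e (j, c'))))]
        simp only [hVp]
        simp only [mul_add, Finset.mul_sum, Finset.sum_mul, Finset.sum_add_distrib, mul_assoc]
        rw [Finset.sum_comm]
        ring_nf
        simp only [mvec, Pi.add_apply]
end

section
/- Let F be a nonempty set of time-dependent vector fields f: [0,1] × ℝ^d → ℝ^d, each continuous in t and Lipschitz in x, and let z_1, ..., z_n ∈ ℝ^d be points such that for each f ∈ F and each i the flow φ^f(t, z_i) exists on [0,1]. Fix a component index k ∈ {1, ..., d}. Assume that for every sign vector ε ∈ {−1, 1}^n the suprema sup_{f ∈ F} Σ_{i=1}^n ε_i (φ^f(1, z_i))_k and, for each t ∈ [0,1], sup_{f ∈ F} Σ_{i=1}^n ε_i f_k(t, φ^f(t, z_i)) are finite, and that t ↦ E_ε[sup_{f ∈ F} Σ_{i=1}^n ε_i f_k(t, φ^f(t, z_i))] is integrable on [0,1]. Then E_ε[ sup_{f ∈ F} Σ_{i=1}^n ε_i (φ^f(1, z_i))_k ] ≤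 ∫_0^1 E_ε[ sup_{f ∈ F} Σ_{i=1}^n ε_i f_k(t, φ^f(t, z_i)) ] dt, where E_ε denotes the average over ε uniform on {−1, 1}^n. -/
open Set

/-- The sign `±1` associated with a Boolean Rademacher variable. -/
def sg (b : Bool) : ℝ := if b then 1 else -1

lemma ftc_aux (u v : ℝ → ℝ)
    (hd : ∀ t ∈ Icc (0:ℝ) 1, HasDerivWithinAt u (v t) (Icc 0 1) t)
    (hv : ContinuousOn v (Icc (0:ℝ) 1)) :
    ∫ t in (0:ℝ)..1, v t = u 1 - u 0 := by
  apply intervalIntegral.integral_eq_sub_of_hasDeriv_right_of_le zero_le_one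
  · exact fun t ht => (hd t ht).continuousWithinAt
  · intro t ht
    exact (hd t (Ioo_subset_Icc_self ht)).mono_of_mem_nhdsWithin
      (mem_nhdsWithin_of_mem_nhds (Icc_mem_nhds ht.1 ht.2))
  · exact hv.intervalIntegrable_of_Icc zero_le_one

lemma sum_sg (n : ℕ) (i : Fin n) : ∑ e : Fin n → Bool, sg (e i) = 0 := by
  apply Finset.sum_ninvolution (fun e => Function.update e i (!(e i)))
  · intro e
    simp only [Function.update_self, sg]
    cases e i <;> simp
  · intro e h hc
    have := congrFun hc i
    simp [Function.update_self] at this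
  · intro e; exact Finset.mem_univ _
  · intro e
    funext j
    by_cases hj : j = i
    · subst hj; simp [Function.update_self]
    · simp [Function.update_of_ne hj]

/-- Rademacher complexity of the `k`-th component of time-1 flow maps is bounded by the
time-integral of the Rademacher complexity of the `k`-th component of the generating
vector fields evaluated along the flows:
`E_ε[sup_{f ∈ F} Σᵢ εᵢ (φ^f(1,zᵢ))ₖ] ≤ ∫₀¹ E_ε[sup_{f ∈ F} Σᵢ εᵢ fₖ(t, φ^f(t,zᵢ))] dt`. -/
theorem rademacher_flow_le_integral_rademacher_field
    (d n : ℕ) (k : Fin d)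
    (F : Set (ℝ → (Fin d → ℝ) → Fin d → ℝ)) (hF : F.Nonempty)
    (hreg : ∀ f ∈ F, (∀ x, Continuous fun t => f t x) ∧
      ∃ L : NNReal, ∀ t : ℝ, LipschitzWith L (f t))
    (z : Fin n → Fin d → ℝ)
    (φ : (ℝ → (Fin d → ℝ) → Fin d → ℝ) → (Fin d → ℝ) → ℝ → Fin d → ℝ)
    (hφ0 : ∀ f ∈ F, ∀ i : Fin n, φ f (z i) 0 = z i)
    (hφode : ∀ f ∈ F, ∀ i : Fin n, ∀ t ∈ Icc (0:ℝ) 1,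
      HasDerivWithinAt (φ f (z i)) (f t (φ f (z i) t)) (Icc 0 1) t)
    -- finiteness of the suprema
    (hbdd1 : ∀ e : Fin n → Bool,
      BddAbove (Set.range fun f : F => ∑ i, sg (e i) * φ f.1 (z i) 1 k))
    (hbdd2 : ∀ e : Fin n → Bool, ∀ t ∈ Icc (0:ℝ) 1,
      BddAbove (Set.range fun f : F => ∑ i, sg (e i) * f.1 t (φ f.1 (z i) t) k))
    -- integrability of the inner Rademacher average
    (hint : IntervalIntegrable
      (fun t => (∑ e : Fin n → Bool, ⨆ f : F, ∑ i, sg (e i) * f.1 t (φ f.1 (z i) t) k)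
        / 2 ^ n)
      MeasureTheory.volume 0 1) :
    (∑ e : Fin n → Bool, ⨆ f : F, ∑ i, sg (e i) * φ f.1 (z i) 1 k) / 2 ^ n
      ≤ ∫ t in (0:ℝ)..1,
          (∑ e : Fin n → Bool, ⨆ f : F, ∑ i, sg (e i) * f.1 t (φ f.1 (z i) t) k)
            / 2 ^ n := by
  haveI : Nonempty F := hF.to_subtype
  -- continuity of flows on [0,1]
  have contφ : ∀ f ∈ F, ∀ i : Fin n, ContinuousOn (fun t => φ f (z i) t) (Icc (0:ℝ) 1) :=
    fun f hf i t ht => (hφode f hf i t ht).continuousWithinAt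
  -- continuity of the integrand components
  have contB : ∀ f ∈ F, ∀ i : Fin n,
      ContinuousOn (fun t => f t (φ f (z i) t) k) (Icc (0:ℝ) 1) := by
    intro f hf i
    obtain ⟨hc, L, hL⟩ := hreg f hf
    have hjoint : Continuous (fun p : (Fin d → ℝ) × ℝ => f p.2 p.1) :=
      continuous_prod_of_continuous_lipschitzWith _ L (fun x => hc x) (fun t => hL t)
    have h1 : ContinuousOn (fun t : ℝ => f t (φ f (z i) t)) (Icc (0:ℝ) 1) :=
      by have := hjoint.comp_continuousOn ((contφ f hf i).prodMk continuousOn_id); exact this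
    exact (continuous_apply k).comp_continuousOn h1
  -- interval integrability of the summed integrand for each (e, f)
  have contBsum : ∀ f ∈ F, ∀ e : Fin n → Bool,
      ContinuousOn (fun t => ∑ i, sg (e i) * f t (φ f (z i) t) k) (Icc (0:ℝ) 1) := by
    intro f hf e
    exact continuousOn_finset_sum _ fun i _ => (continuousOn_const.mul (contB f hf i))
  have intB : ∀ f ∈ F, ∀ e : Fin n → Bool,
      IntervalIntegrable (fun t => ∑ i, sg (e i) * f t (φ f (z i) t) k)
        MeasureTheory.volume 0 1 :=
    fun f hf e => (contBsum f hf e).intervalIntegrable_of_Icc zero_le_one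
  -- FTC: key identity
  have key : ∀ f ∈ F, ∀ e : Fin n → Bool,
      (∑ i, sg (e i) * φ f (z i) 1 k)
        = (∑ i, sg (e i) * z i k)
          + ∫ t in (0:ℝ)..1, ∑ i, sg (e i) * f t (φ f (z i) t) k := by
    intro f hf e
    have hder : ∀ t ∈ Icc (0:ℝ) 1,
        HasDerivWithinAt (fun t => ∑ i, sg (e i) * φ f (z i) t k)
          (∑ i, sg (e i) * f t (φ f (z i) t) k) (Icc 0 1) t := by
      intro t ht
      apply HasDerivWithinAt.fun_sum
      intro i _
      have hk : HasDerivWithinAt (fun t => φ f (z i) t k)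
          (f t (φ f (z i) t) k) (Icc 0 1) t :=
        ((ContinuousLinearMap.proj (R := ℝ) (φ := fun _ : Fin d => ℝ)
          k).hasFDerivAt.comp_hasDerivWithinAt t (hφode f hf i t ht))
      exact hk.const_mul _
    have := ftc_aux _ _ hder (contBsum f hf e)
    rw [this]
    simp [hφ0 f hf]
  -- the sums of signs over all sign vectors vanish
  have sumC : ∑ e : Fin n → Bool, ∑ i, sg (e i) * z i k = 0 := by
    rw [Finset.sum_comm]
    apply Finset.sum_eq_zero
    intro i _
    rw [← Finset.sum_mul, sum_sg, zero_mul]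
  -- integrability of the sum of suprema
  have hintX : IntervalIntegrable
      (fun t => ∑ e : Fin n → Bool, ⨆ f : F, ∑ i, sg (e i) * f.1 t (φ f.1 (z i) t) k)
      MeasureTheory.volume 0 1 := by
    have h2 : ((2:ℝ) ^ n) ≠ 0 := by positivity
    have := hint.mul_const ((2:ℝ) ^ n)
    simpa [div_mul_cancel₀, h2] using this
  -- main inequality without the normalization
  have main : (∑ e : Fin n → Bool, ⨆ f : F, ∑ i, sg (e i) * φ f.1 (z i) 1 k)
      ≤ ∫ t in (0:ℝ)..1,
          ∑ e : Fin n → Bool, ⨆ f : F, ∑ i, sg (e i) * f.1 t (φ f.1 (z i) t) k := by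
    apply le_of_forall_pos_le_add
    intro δ hδ
    have h2 : (0:ℝ) < 2 ^ n := by positivity
    have hδ' : 0 < δ / 2 ^ n := by positivity
    have hex : ∀ e : Fin n → Bool, ∃ f : F,
        (⨆ g : F, ∑ i, sg (e i) * φ g.1 (z i) 1 k)
          < (∑ i, sg (e i) * φ f.1 (z i) 1 k) + δ / 2 ^ n := by
      intro e
      obtain ⟨f, hf⟩ := exists_lt_of_lt_ciSup
        (show (⨆ g : F, ∑ i, sg (e i) * φ g.1 (z i) 1 k) - δ / 2 ^ n
          < ⨆ g : F, ∑ i, sg (e i) * φ g.1 (z i) 1 k from sub_lt_self _ hδ')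
      exact ⟨f, by linarith⟩
    choose fc hfc using hex
    have card2 : (Finset.univ : Finset (Fin n → Bool)).card = 2 ^ n := by
      simp [Finset.card_univ]
    calc (∑ e : Fin n → Bool, ⨆ f : F, ∑ i, sg (e i) * φ f.1 (z i) 1 k)
        ≤ ∑ e : Fin n → Bool, ((∑ i, sg (e i) * φ (fc e).1 (z i) 1 k) + δ / 2 ^ n) :=
          Finset.sum_le_sum fun e _ => (hfc e).le
      _ = (∑ e : Fin n → Bool, ∑ i, sg (e i) * φ (fc e).1 (z i) 1 k) + δ := by
          rw [Finset.sum_add_distrib, Finset.sum_const, card2, nsmul_eq_mul]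
          congr 1
          push_cast
          field_simp
      _ = (∑ e : Fin n → Bool,
            ∫ t in (0:ℝ)..1, ∑ i, sg (e i) * (fc e).1 t (φ (fc e).1 (z i) t) k) + δ := by
          congr 1
          have : ∀ e : Fin n → Bool, ∑ i, sg (e i) * φ (fc e).1 (z i) 1 k
              = (∑ i, sg (e i) * z i k)
                + ∫ t in (0:ℝ)..1, ∑ i, sg (e i) * (fc e).1 t (φ (fc e).1 (z i) t) k :=
            fun e => key (fc e).1 (fc e).2 e
          rw [Finset.sum_congr rfl fun e _ => this e, Finset.sum_add_distrib, sumC, zero_add]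
      _ = (∫ t in (0:ℝ)..1,
            ∑ e : Fin n → Bool, ∑ i, sg (e i) * (fc e).1 t (φ (fc e).1 (z i) t) k) + δ := by
          rw [intervalIntegral.integral_finset_sum]
          exact fun e _ => intB (fc e).1 (fc e).2 e
      _ ≤ (∫ t in (0:ℝ)..1,
            ∑ e : Fin n → Bool, ⨆ f : F, ∑ i, sg (e i) * f.1 t (φ f.1 (z i) t) k) + δ := by
          apply add_le_add_left
          have hL : IntervalIntegrable
              (fun t => ∑ e : Fin n → Bool,
                ∑ i, sg (e i) * (fc e).1 t (φ (fc e).1 (z i) t) k)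
              MeasureTheory.volume 0 1 := by
            have := IntervalIntegrable.sum (ε := ℝ) (μ := MeasureTheory.volume) (a := (0:ℝ)) (b := 1)
              (f := fun e t => ∑ i, sg (e i) * (fc e).1 t (φ (fc e).1 (z i) t) k)
              Finset.univ (fun e _ => intB (fc e).1 (fc e).2 e)
            convert this using 1
            · rfl
            funext t
            simp
          exact intervalIntegral.integral_mono_on zero_le_one hL hintX
            fun t ht => Finset.sum_le_sum fun e _ => le_ciSup (hbdd2 e t ht) (fc e)
  -- conclude
  rw [intervalIntegral.integral_div]
  gcongr
end

section
/- Let C ⊂ ℝ^d be compact and let F be a nonempty set of time-dependent vector fields f: [0,1] × ℝ^d → ℝ^d, each continuous in t and Lipschitz in x, such that for every f ∈ F and every z ∈ C the flow φ^f(t, z) exists on [0,1] and remains in C. Fix a component index k ∈ {1, ..., d} and points z_1, ..., z_n ∈ C. Suppose there is an integrable function M: [0,1] → ℝ such that for every t ∈ [0,1] and every family of points (y_{f,i})_{f ∈ F, 1 ≤ i ≤ n} in C one has E_ε[ sup_{f ∈ F} Σ_{i=1}^n ε_i f_k(t, y_{f,i}) ] ≤ M(t), where E_ε denotes the average over ε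 uniform on {−1, 1}^n, and suppose all suprema involved are finite. Then the empirical Rademacher complexity of the k-th components of the time-1 flow maps satisfies E_ε[ sup_{f ∈ F} Σ_{i=1}^n ε_i (φ^f(1, z_i))_k ] ≤ ∫_0^1 M(t) dt. -/
open Set

set_option maxHeartbeats 1000000 in
/-- If the (empirical) Rademacher complexity of the `k`-th components of the vector
fields in `F`, evaluated at arbitrary families of points of the compact set `C`, is
bounded by an integrable function `M(t)`, then the empirical Rademacher complexity of
the `k`-th components of the time-1 flow maps at points `z₁, …, zₙ ∈ C` is bounded by
`∫₀¹ M(t) dt`. -/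
theorem rademacher_flow_le_integral_bound
    (d n : ℕ) (k : Fin d)
    (C : Set (Fin d → ℝ)) (hC : IsCompact C)
    (F : Set (ℝ → (Fin d → ℝ) → Fin d → ℝ)) (hF : F.Nonempty)
    (hreg : ∀ f ∈ F, (∀ x, Continuous fun t => f t x) ∧
      ∃ L : NNReal, ∀ t : ℝ, LipschitzWith L (f t))
    (φ : (ℝ → (Fin d → ℝ) → Fin d → ℝ) → (Fin d → ℝ) → ℝ → Fin d → ℝ)
    -- for every `f ∈ F` and `z ∈ C`, the flow exists on [0,1] and remains in `C`
    (hφ0 : ∀ f ∈ F, ∀ z ∈ C, φ f z 0 = z)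
    (hφode : ∀ f ∈ F, ∀ z ∈ C, ∀ t ∈ Icc (0:ℝ) 1,
      HasDerivWithinAt (φ f z) (f t (φ f z t)) (Icc 0 1) t)
    (hφC : ∀ f ∈ F, ∀ z ∈ C, ∀ t ∈ Icc (0:ℝ) 1, φ f z t ∈ C)
    (z : Fin n → Fin d → ℝ) (hz : ∀ i, z i ∈ C)
    (M : ℝ → ℝ) (hM : IntervalIntegrable M MeasureTheory.volume 0 1)
    -- the Rademacher average of the fields at arbitrary points of C is bounded by M(t)
    (hMbound : ∀ t ∈ Icc (0:ℝ) 1, ∀ y : F → Fin n → Fin d → ℝ,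
      (∀ f : F, ∀ i : Fin n, y f i ∈ C) →
      (∑ e : Fin n → Bool, ⨆ f : F, ∑ i, sg (e i) * f.1 t (y f i) k) / 2 ^ n ≤ M t)
    -- finiteness of all suprema involved
    (hbdd1 : ∀ e : Fin n → Bool,
      BddAbove (Set.range fun f : F => ∑ i, sg (e i) * φ f.1 (z i) 1 k))
    (hbdd2 : ∀ e : Fin n → Bool, ∀ t ∈ Icc (0:ℝ) 1, ∀ y : F → Fin n → Fin d → ℝ,
      (∀ f : F, ∀ i : Fin n, y f i ∈ C) →
      BddAbove (Set.range fun f : F => ∑ i, sg (e i) * f.1 t (y f i) k)) :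
    (∑ e : Fin n → Bool, ⨆ f : F, ∑ i, sg (e i) * φ f.1 (z i) 1 k) / 2 ^ n
      ≤ ∫ t in (0:ℝ)..1, M t := by
  obtain ⟨f₀, hf₀⟩ := hF
  haveI : Nonempty F := ⟨⟨f₀, hf₀⟩⟩
  -- joint continuity of each field
  have hjoint : ∀ f ∈ F, Continuous (fun p : (Fin d → ℝ) × ℝ => f p.2 p.1) := by
    intro f hf
    obtain ⟨hc, L, hL⟩ := hreg f hf
    exact continuous_prod_of_continuous_lipschitzWith _ L (fun x => hc x) (fun t => hL t)
  -- continuity of the flows on [0,1]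
  have hφcont : ∀ f ∈ F, ∀ w ∈ C, ContinuousOn (φ f w) (Icc 0 1) := by
    intro f hf w hw t ht
    exact (hφode f hf w hw t ht).continuousWithinAt
  -- continuity, hence integrability, of the integrand
  have hint : ∀ f ∈ F, ∀ w ∈ C, ∀ j : Fin d,
      IntervalIntegrable (fun t => f t (φ f w t) j) MeasureTheory.volume 0 1 := by
    intro f hf w hw j
    have h1 : ContinuousOn (fun t => f t (φ f w t) j) (Icc 0 1) := by
      have := ((continuous_apply j).comp (hjoint f hf)).comp_continuousOn
        (ContinuousOn.prodMk (hφcont f hf w hw) continuousOn_id)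
      exact this
    rw [intervalIntegrable_iff_integrableOn_Icc_of_le zero_le_one]
    exact h1.integrableOn_compact isCompact_Icc
  -- fundamental theorem of calculus for each flow component
  have hFTC : ∀ f ∈ F, ∀ w ∈ C,
      (∫ t in (0:ℝ)..1, f t (φ f w t) k) = φ f w 1 k - w k := by
    intro f hf w hw
    have hcont : ContinuousOn (fun t => φ f w t k) (Icc 0 1) :=
      (continuous_apply k).comp_continuousOn (hφcont f hf w hw)
    have hderiv : ∀ t ∈ Ioo (0:ℝ) 1,
        HasDerivWithinAt (fun s => φ f w s k) (f t (φ f w t) k) (Ioi t) t := by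
      intro t ht
      have h1 : HasDerivWithinAt (fun s => φ f w s k) (f t (φ f w t) k) (Icc 0 1) t :=
        hasDerivWithinAt_pi.1 (hφode f hf w hw t ⟨ht.1.le, ht.2.le⟩) k
      refine h1.mono_of_mem_nhdsWithin ?_
      refine Filter.mem_of_superset (Ioc_mem_nhdsGT_of_mem ⟨le_refl t, ht.2⟩) ?_
      exact fun s hs => ⟨le_trans ht.1.le hs.1.le, hs.2⟩
    have := intervalIntegral.integral_eq_sub_of_hasDeriv_right_of_le zero_le_one hcont hderiv
      (hint f hf w hw k)
    rw [this, hφ0 f hf w hw]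
  -- each summand integrand (for a fixed sign pattern and field) is integrable
  have hHint : ∀ f ∈ F, ∀ e : Fin n → Bool,
      IntervalIntegrable (fun t => ∑ i, sg (e i) * f t (φ f (z i) t) k)
        MeasureTheory.volume 0 1 := by
    intro f hf e
    have h := IntervalIntegrable.sum (f := fun i t => sg (e i) * f t (φ f (z i) t) k)
      Finset.univ fun i _ => (hint f hf (z i) (hz i) k).const_mul (sg (e i))
    simpa [Finset.sum_fn] using h
  rw [div_le_iff₀ (by positivity : (0:ℝ) < 2 ^ n)]
  refine le_of_forall_pos_le_add fun ε hε => ?_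
  -- choose near-optimal fields
  have hchoice : ∀ e : Fin n → Bool, ∃ f : F,
      (⨆ f : F, ∑ i, sg (e i) * φ f.1 (z i) 1 k)
        ≤ (∑ i, sg (e i) * φ f.1 (z i) 1 k) + ε / 2 ^ n := by
    intro e
    have h1 : (⨆ f : F, ∑ i, sg (e i) * φ f.1 (z i) 1 k) - ε / 2 ^ n
        < ⨆ f : F, ∑ i, sg (e i) * φ f.1 (z i) 1 k :=
      sub_lt_self _ (by positivity)
    obtain ⟨f, hf⟩ := exists_lt_of_lt_ciSup h1
    exact ⟨f, by linarith⟩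
  choose fe hfe using hchoice
  have hcard : (Finset.univ : Finset (Fin n → Bool)).card = 2 ^ n := by
    simp [Finset.card_univ]
  calc (∑ e : Fin n → Bool, ⨆ f : F, ∑ i, sg (e i) * φ f.1 (z i) 1 k)
      ≤ ∑ e : Fin n → Bool, ((∑ i, sg (e i) * φ (fe e).1 (z i) 1 k) + ε / 2 ^ n) :=
        Finset.sum_le_sum fun e _ => hfe e
    _ = (∑ e : Fin n → Bool, ∑ i, sg (e i) * φ (fe e).1 (z i) 1 k) + ε := by
        rw [Finset.sum_add_distrib, Finset.sum_const, hcard, nsmul_eq_mul]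
        congr 1
        field_simp
        norm_num
    _ ≤ (∫ t in (0:ℝ)..1, M t) * 2 ^ n + ε := by
        gcongr
        -- rewrite each inner sum using the FTC
        have hsum : ∀ e : Fin n → Bool,
            (∑ i, sg (e i) * φ (fe e).1 (z i) 1 k)
              = (∑ i, sg (e i) * z i k)
                + ∫ t in (0:ℝ)..1, ∑ i, sg (e i) * (fe e).1 t (φ (fe e).1 (z i) t) k := by
          intro e
          rw [intervalIntegral.integral_finset_sum fun i _ =>
            (hint (fe e).1 (fe e).2 (z i) (hz i) k).const_mul (sg (e i))]
          rw [← Finset.sum_add_distrib]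
          refine Finset.sum_congr rfl fun i _ => ?_
          rw [intervalIntegral.integral_const_mul, hFTC (fe e).1 (fe e).2 (z i) (hz i)]
          ring
        simp only [hsum]
        rw [Finset.sum_add_distrib]
        -- the constant terms sum to zero
        have hzero : (∑ e : Fin n → Bool, ∑ i, sg (e i) * z i k) = 0 := by
          rw [Finset.sum_comm]
          refine Finset.sum_eq_zero fun i _ => ?_
          refine Finset.sum_involution (fun e _ => Function.update e i (!e i))
            (fun e _ => ?_) (fun e _ _ => ?_) (fun e _ => Finset.mem_univ _)
            (fun e _ => ?_)
          · simp only [Function.update_self]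
            cases e i <;> simp [sg]
          · intro h
            have := congrFun h i
            simp at this
          · funext j
            by_cases hji : j = i
            · subst hji; simp
            · simp [Function.update_of_ne hji]
        rw [hzero, zero_add]
        -- interchange sum and integral, then bound pointwise by 2^n * M t
        rw [← intervalIntegral.integral_finset_sum fun e _ => hHint (fe e).1 (fe e).2 e]
        have hbound : ∀ t ∈ Icc (0:ℝ) 1,
            (∑ e : Fin n → Bool, ∑ i, sg (e i) * (fe e).1 t (φ (fe e).1 (z i) t) k)
              ≤ 2 ^ n * M t := by
          intro t ht
          set y : F → Fin n → Fin d → ℝ := fun f i => φ f.1 (z i) t with hy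
          have hyC : ∀ f : F, ∀ i : Fin n, y f i ∈ C :=
            fun f i => hφC f.1 f.2 (z i) (hz i) t ht
          have h1 : (∑ e : Fin n → Bool, ∑ i, sg (e i) * (fe e).1 t (φ (fe e).1 (z i) t) k)
              ≤ ∑ e : Fin n → Bool, ⨆ f : F, ∑ i, sg (e i) * f.1 t (y f i) k := by
            refine Finset.sum_le_sum fun e _ => ?_
            exact le_ciSup (hbdd2 e t ht y hyC) (fe e)
          have h2 := hMbound t ht y hyC
          rw [div_le_iff₀ (by positivity : (0:ℝ) < 2 ^ n)] at h2
          calc _ ≤ _ := h1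
            _ ≤ 2 ^ n * M t := by rw [mul_comm]; exact h2
        have hintsum : IntervalIntegrable
            (fun t => ∑ e : Fin n → Bool, ∑ i, sg (e i) * (fe e).1 t (φ (fe e).1 (z i) t) k)
            MeasureTheory.volume 0 1 :=
          by
            have h := IntervalIntegrable.sum
              (f := fun e t => ∑ i, sg (e i) * (fe e).1 t (φ (fe e).1 (z i) t) k)
              Finset.univ fun e _ => hHint (fe e).1 (fe e).2 e
            simpa [Finset.sum_fn] using h
        calc (∫ t in (0:ℝ)..1,
              ∑ e : Fin n → Bool, ∑ i, sg (e i) * (fe e).1 t (φ (fe e).1 (z i) t) k)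
            ≤ ∫ t in (0:ℝ)..1, 2 ^ n * M t :=
              intervalIntegral.integral_mono_on zero_le_one hintsum (hM.const_mul _) hbound
          _ = (∫ t in (0:ℝ)..1, M t) * 2 ^ n := by
              rw [intervalIntegral.integral_const_mul]; ring
end

section
/- Consider the linear-quadratic particle shooting system: σ: ℝ → ℝ is continuously differentiable and applied componentwise, M_A and M_b are symmetric positive definite d×d real matrices, and (q_j, p_j): [0,T] → ℝ^d × ℝ^d (j = 1, ..., K) are differentiable curves satisfying, for all t ∈ [0,T], q̇_j(t) = A(t) σ(q_j(t)) + b(t) and ṗ_j(t) = − Dσ(q_j(t)) A(t)^⊤ p_j(t), where Dσ(q) denotes the diagonal matrix with diagonal entries σ'(q^1), ..., σ'(q^d), and where A(t) = − M_A^{-1} Σ_{j=1}^K p_j(t) σ(q_j(t))^⊤ and b(t) = − M_b^{-1} Σ_{j=1}^K p_j(t). Then the function t ↦ R(t) := ½ Tr(A(t)^⊤ M_A A(t)) + ½ b(t)^⊤ M_b b(t) is constant on [0,T]. -/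
open Set Matrix

private lemma vecMulVecMulVec' {n : ℕ} (a b z : Fin n → ℝ) :
    (vecMulVec a b) *ᵥ z = (b ⬝ᵥ z) • a := by
  ext i
  simp only [mulVec, vecMulVec_apply, dotProduct, Pi.smul_apply, smul_eq_mul, Finset.sum_mul]
  rw [← Finset.sum_mul, Finset.sum_mul]
  exact Finset.sum_congr rfl fun x _ => by ring

private lemma transposeVecMulVec' {n : ℕ} (a b : Fin n → ℝ) :
    (vecMulVec a b)ᵀ = vecMulVec b a := by
  ext i j; simp [vecMulVec_apply, mul_comm]

private lemma vecMulVecMulMat' {n : ℕ} (b a : Fin n → ℝ) (N : Matrix (Fin n) (Fin n) ℝ) :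
    vecMulVec b a * N = vecMulVec b (a ᵥ* N) := by
  ext i j
  simp only [mul_apply, vecMulVec_apply, vecMul, dotProduct, Finset.mul_sum]
  exact Finset.sum_congr rfl fun x _ => by ring

private lemma vecMulVecMulVecMulVec' {n : ℕ} (b x c e : Fin n → ℝ) :
    vecMulVec b x * vecMulVec c e = (x ⬝ᵥ c) • vecMulVec b e := by
  ext i j
  simp only [mul_apply, vecMulVec_apply, dotProduct, Matrix.smul_apply, smul_eq_mul, Finset.sum_mul]
  rw [← Finset.sum_mul, Finset.sum_mul]
  exact Finset.sum_congr rfl fun y _ => by ring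

private lemma traceVecMulVec' {n : ℕ} (b e : Fin n → ℝ) :
    Matrix.trace (vecMulVec b e) = b ⬝ᵥ e := by
  simp [Matrix.trace, Matrix.diag, vecMulVec_apply, dotProduct]

private lemma traceForm' {n : ℕ} (N : Matrix (Fin n) (Fin n) ℝ) (a b c e : Fin n → ℝ) :
    Matrix.trace ((vecMulVec a b)ᵀ * N * vecMulVec c e) = (a ⬝ᵥ N *ᵥ c) * (b ⬝ᵥ e) := by
  rw [transposeVecMulVec', vecMulVecMulMat', vecMulVecMulVecMulVec', trace_smul, traceVecMulVec',
    ← dotProduct_mulVec, smul_eq_mul]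

private lemma sumMulVec' {n m : ℕ} (f : Fin m → Matrix (Fin n) (Fin n) ℝ) (z : Fin n → ℝ) :
    (∑ j, f j) *ᵥ z = ∑ j, f j *ᵥ z := by
  ext i
  simp only [mulVec, dotProduct, Matrix.sum_apply, Finset.sum_apply, Finset.sum_mul]
  exact Finset.sum_comm

private lemma mulVecSum' {n m : ℕ} (N : Matrix (Fin n) (Fin n) ℝ) (f : Fin m → Fin n → ℝ) :
    N *ᵥ (∑ j, f j) = ∑ j, N *ᵥ f j := by
  ext i
  simp only [mulVec, dotProduct, Finset.sum_apply, Finset.mul_sum]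
  exact Finset.sum_comm

private lemma dotSum' {n m : ℕ} (x : Fin n → ℝ) (f : Fin m → Fin n → ℝ) :
    x ⬝ᵥ (∑ j, f j) = ∑ j, x ⬝ᵥ f j := by
  simp only [dotProduct, Finset.sum_apply, Finset.mul_sum]
  exact Finset.sum_comm

private lemma sumDot' {n m : ℕ} (f : Fin m → Fin n → ℝ) (y : Fin n → ℝ) :
    (∑ j, f j) ⬝ᵥ y = ∑ j, f j ⬝ᵥ y := by
  simp only [dotProduct, Finset.sum_apply, Finset.sum_mul]
  exact Finset.sum_comm

private lemma dotMulVecSymm' {n : ℕ} {N : Matrix (Fin n) (Fin n) ℝ} (hN : Nᵀ = N)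
    (x y : Fin n → ℝ) : x ⬝ᵥ N *ᵥ y = y ⬝ᵥ N *ᵥ x := by
  rw [dotProduct_mulVec, ← mulVec_transpose, hN, dotProduct_comm]

private lemma hasDerivWithinAt_dot' {n : ℕ} {f g : ℝ → Fin n → ℝ} {f' g' : Fin n → ℝ}
    {s : Set ℝ} {t : ℝ} (hf : HasDerivWithinAt f f' s t) (hg : HasDerivWithinAt g g' s t) :
    HasDerivWithinAt (fun u => f u ⬝ᵥ g u) (f' ⬝ᵥ g t + f t ⬝ᵥ g') s t := by
  have h := HasDerivWithinAt.fun_sum (u := Finset.univ)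
    (A := fun i u => f u i * g u i) (A' := fun i => f' i * g t i + f t i * g' i)
    (fun i _ => ((hasDerivWithinAt_pi.1 hf i).mul (hasDerivWithinAt_pi.1 hg i)))
  simpa [dotProduct, Finset.sum_add_distrib] using h

private lemma hasDerivWithinAt_mulVec' {n : ℕ} (M : Matrix (Fin n) (Fin n) ℝ)
    {g : ℝ → Fin n → ℝ} {g' : Fin n → ℝ} {s : Set ℝ} {t : ℝ}
    (hg : HasDerivWithinAt g g' s t) :
    HasDerivWithinAt (fun u => M *ᵥ g u) (M *ᵥ g') s t := by
  rw [hasDerivWithinAt_pi]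
  intro i
  simp only [mulVec, dotProduct]
  exact HasDerivWithinAt.fun_sum fun x _ => ((hasDerivWithinAt_pi.1 hg x).const_mul (M i x))

private lemma alg' {d K : ℕ} (N Nb : Matrix (Fin d) (Fin d) ℝ)
    (hNsymm : Nᵀ = N) (hNbsymm : Nbᵀ = Nb)
    (P F G : Fin K → Fin d → ℝ) (A : Matrix (Fin d) (Fin d) ℝ) (bb : Fin d → ℝ)
    (hA : A = -(N * ∑ j, vecMulVec (P j) (F j)))
    (hbb : bb = -(Nb *ᵥ ∑ j, P j))
    (W V F' : Fin K → Fin d → ℝ)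
    (hW : ∀ j, W j = -((Matrix.diagonal (G j)) *ᵥ (Aᵀ *ᵥ P j)))
    (hV : ∀ j, V j = A *ᵥ F j + bb)
    (hF' : ∀ j, F' j = fun i => G j i * V j i) :
    (1/2) * (∑ j, ∑ k, ((W j ⬝ᵥ N *ᵥ P k + P j ⬝ᵥ N *ᵥ W k) * (F j ⬝ᵥ F k)
        + (P j ⬝ᵥ N *ᵥ P k) * (F' j ⬝ᵥ F k + F j ⬝ᵥ F' k)))
      + (1/2) * (∑ j, ∑ k, (W j ⬝ᵥ Nb *ᵥ P k + P j ⬝ᵥ Nb *ᵥ W k)) = 0 := by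
  have hAz : ∀ z, A *ᵥ z = -∑ k, (F k ⬝ᵥ z) • (N *ᵥ P k) := by
    intro z
    rw [hA, Matrix.neg_mulVec, ← mulVec_mulVec, sumMulVec', neg_inj]
    rw [show (∑ j, (vecMulVec (P j) (F j)) *ᵥ z) = ∑ j, (F j ⬝ᵥ z) • P j from
      Finset.sum_congr rfl fun j _ => vecMulVecMulVec' _ _ _, mulVecSum']
    exact Finset.sum_congr rfl fun j _ => by rw [Matrix.mulVec_smul]
  have c1 : ∀ (x : Fin d → ℝ) (w : Fin d → ℝ),
      ∑ k, (w ⬝ᵥ N *ᵥ P k) * (x ⬝ᵥ F k) = -(w ⬝ᵥ A *ᵥ x) := by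
    intro x w
    rw [hAz x, dotProduct_neg, neg_neg, dotSum']
    exact Finset.sum_congr rfl fun k _ => by
      rw [dotProduct_smul, smul_eq_mul, dotProduct_comm (F k) x, mul_comm]
  have c3 : ∀ w : Fin d → ℝ, ∑ k, w ⬝ᵥ Nb *ᵥ P k = -(w ⬝ᵥ bb) := by
    intro w
    rw [hbb, dotProduct_neg, neg_neg, mulVecSum', dotSum']
  have swapN : ∀ x y, x ⬝ᵥ N *ᵥ y = y ⬝ᵥ N *ᵥ x := dotMulVecSymm' hNsymm
  have swapNb : ∀ x y, x ⬝ᵥ Nb *ᵥ y = y ⬝ᵥ Nb *ᵥ x := dotMulVecSymm' hNbsymm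
  set X : Fin K → Fin K → ℝ := fun j k =>
    (W j ⬝ᵥ N *ᵥ P k) * (F j ⬝ᵥ F k) + (P j ⬝ᵥ N *ᵥ P k) * (F' j ⬝ᵥ F k) with hX
  set U : Fin K → Fin K → ℝ := fun j k => W j ⬝ᵥ Nb *ᵥ P k with hU
  have hsplit1 : ∀ j k, (W j ⬝ᵥ N *ᵥ P k + P j ⬝ᵥ N *ᵥ W k) * (F j ⬝ᵥ F k)
      + (P j ⬝ᵥ N *ᵥ P k) * (F' j ⬝ᵥ F k + F j ⬝ᵥ F' k) = X j k + X k j := by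
    intro j k
    rw [hX]
    simp only
    rw [swapN (P j) (W k), swapN (P k) (P j), dotProduct_comm (F k) (F j),
      dotProduct_comm (F j) (F' k)]
    ring
  have hsplit2 : ∀ j k, W j ⬝ᵥ Nb *ᵥ P k + P j ⬝ᵥ Nb *ᵥ W k = U j k + U k j := by
    intro j k
    rw [hU]
    simp only
    rw [swapNb (P j) (W k)]
  have hswapsum : ∀ Y : Fin K → Fin K → ℝ,
      (∑ j, ∑ k, (Y j k + Y k j)) = 2 * ∑ j, ∑ k, Y j k := by
    intro Y
    simp only [Finset.sum_add_distrib]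
    rw [Finset.sum_comm (f := fun j k => Y k j)]
    ring
  calc (1/2) * (∑ j, ∑ k, ((W j ⬝ᵥ N *ᵥ P k + P j ⬝ᵥ N *ᵥ W k) * (F j ⬝ᵥ F k)
        + (P j ⬝ᵥ N *ᵥ P k) * (F' j ⬝ᵥ F k + F j ⬝ᵥ F' k)))
      + (1/2) * (∑ j, ∑ k, (W j ⬝ᵥ Nb *ᵥ P k + P j ⬝ᵥ Nb *ᵥ W k))
      = (1/2) * (∑ j, ∑ k, (X j k + X k j)) + (1/2) * (∑ j, ∑ k, (U j k + U k j)) := by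
        rw [Finset.sum_congr rfl fun j _ => Finset.sum_congr rfl fun k _ => hsplit1 j k,
          Finset.sum_congr rfl fun j _ => Finset.sum_congr rfl fun k _ => hsplit2 j k]
    _ = (∑ j, ∑ k, X j k) + (∑ j, ∑ k, U j k) := by rw [hswapsum X, hswapsum U]; ring
    _ = ∑ j, ((∑ k, X j k) + (∑ k, U j k)) := by rw [Finset.sum_add_distrib]
    _ = 0 := by
        refine Finset.sum_eq_zero fun j _ => ?_
        have e1 : ∑ k, (W j ⬝ᵥ N *ᵥ P k) * (F j ⬝ᵥ F k) = -(W j ⬝ᵥ A *ᵥ F j) := c1 (F j) (W j)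
        have e2 : ∑ k, (P j ⬝ᵥ N *ᵥ P k) * (F' j ⬝ᵥ F k) = W j ⬝ᵥ V j := by
          rw [c1 (F' j) (P j)]
          have h1 : P j ⬝ᵥ A *ᵥ F' j = (Aᵀ *ᵥ P j) ⬝ᵥ F' j := by
            rw [dotProduct_mulVec, mulVec_transpose]
          rw [h1]
          have hdiag : F' j = (Matrix.diagonal (G j)) *ᵥ V j := by
            rw [hF' j]; ext i; rw [mulVec_diagonal]
          rw [hdiag, dotMulVecSymm' (Matrix.diagonal_transpose (G j)) (Aᵀ *ᵥ P j) (V j),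
            dotProduct_comm, hW j]
          rw [neg_dotProduct]
        have e3 : ∑ k, U j k = -(W j ⬝ᵥ bb) := c3 (W j)
        rw [hX, hU]
        simp only
        rw [Finset.sum_add_distrib, e1, e2, e3, hV j, dotProduct_add]
        ring

private lemma Requal' {d K : ℕ} (MA Mb : Matrix (Fin d) (Fin d) ℝ)
    (hNsymm : (MA⁻¹)ᵀ = MA⁻¹) (hMAN : MA * MA⁻¹ = 1) (hMbN : Mb * Mb⁻¹ = 1)
    (P F : Fin K → Fin d → ℝ) (A : Matrix (Fin d) (Fin d) ℝ) (bb : Fin d → ℝ)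
    (hA : A = -(MA⁻¹ * ∑ j, vecMulVec (P j) (F j)))
    (hbb : bb = -(Mb⁻¹ *ᵥ ∑ j, P j)) :
    (1/2) * Matrix.trace (Aᵀ * MA * A) + (1/2) * (bb ⬝ᵥ Mb *ᵥ bb)
      = (1/2) * (∑ j, ∑ k, (P j ⬝ᵥ MA⁻¹ *ᵥ P k) * (F j ⬝ᵥ F k))
        + (1/2) * (∑ j, ∑ k, (P j ⬝ᵥ Mb⁻¹ *ᵥ P k)) := by
  congr 1
  · congr 1
    have hP : Aᵀ * MA * A
        = (∑ j, vecMulVec (P j) (F j))ᵀ * MA⁻¹ * (∑ j, vecMulVec (P j) (F j)) := by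
      rw [hA]
      simp only [transpose_neg, transpose_mul, neg_mul, mul_neg, neg_neg]
      rw [hNsymm, Matrix.mul_assoc ((∑ j, vecMulVec (P j) (F j))ᵀ * MA⁻¹) MA
        (MA⁻¹ * (∑ j, vecMulVec (P j) (F j))),
        ← Matrix.mul_assoc MA MA⁻¹ (∑ j, vecMulVec (P j) (F j)), hMAN, Matrix.one_mul]
    rw [hP, transpose_sum, Finset.sum_mul, Finset.sum_mul, trace_sum]
    refine Finset.sum_congr rfl fun j _ => ?_
    rw [Finset.mul_sum, trace_sum]
    exact Finset.sum_congr rfl fun k _ => traceForm' _ _ _ _ _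
  · congr 1
    rw [hbb]
    have h1 : Mb *ᵥ -(Mb⁻¹ *ᵥ ∑ j, P j) = -(∑ j, P j) := by
      rw [Matrix.mulVec_neg, mulVec_mulVec, hMbN, one_mulVec]
    rw [h1, dotProduct_neg, neg_dotProduct, neg_neg, dotProduct_comm]
    rw [sumDot']
    refine Finset.sum_congr rfl fun j _ => ?_
    rw [mulVecSum', dotSum']

/-- Conservation of the quadratic regularizer along the linear-quadratic particle
shooting system: with `A(t) = -M_A⁻¹ ∑ⱼ pⱼ(t) σ(qⱼ(t))ᵀ` and `b(t) = -M_b⁻¹ ∑ⱼ pⱼ(t)`,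
along the Hamiltonian particle dynamics, `t ↦ ½ Tr(A(t)ᵀ M_A A(t)) + ½ b(t)ᵀ M_b b(t)`
is constant on `[0,T]`. -/
theorem shooting_hamiltonian_conserved
    (d K : ℕ) (σ : ℝ → ℝ) (hσ : ContDiff ℝ 1 σ)
    (T : ℝ) (hT : 0 < T)
    (MA Mb : Matrix (Fin d) (Fin d) ℝ)
    (hMAsymm : MA.IsSymm) (hMApos : MA.PosDef)
    (hMbsymm : Mb.IsSymm) (hMbpos : Mb.PosDef)
    (q p : Fin K → ℝ → Fin d → ℝ)
    (A : ℝ → Matrix (Fin d) (Fin d) ℝ) (b : ℝ → Fin d → ℝ)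
    (hA : ∀ t, A t = -(MA⁻¹ * ∑ j, vecMulVec (p j t) (fun i => σ (q j t i))))
    (hb : ∀ t, b t = -(Mb⁻¹.mulVec (∑ j, p j t)))
    (hq : ∀ j, ∀ t ∈ Icc (0:ℝ) T,
      HasDerivWithinAt (q j) ((A t).mulVec (fun i => σ (q j t i)) + b t) (Icc 0 T) t)
    (hp : ∀ j, ∀ t ∈ Icc (0:ℝ) T,
      HasDerivWithinAt (p j)
        (-(Matrix.diagonal (fun i => deriv σ (q j t i))).mulVec ((A t)ᵀ.mulVec (p j t)))
        (Icc 0 T) t) :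
    ∀ t ∈ Icc (0:ℝ) T,
      (1/2) * Matrix.trace ((A t)ᵀ * MA * A t) + (1/2) * (b t ⬝ᵥ Mb.mulVec (b t))
        = (1/2) * Matrix.trace ((A 0)ᵀ * MA * A 0) + (1/2) * (b 0 ⬝ᵥ Mb.mulVec (b 0)) := by
  have hσd : ∀ x : ℝ, HasDerivAt σ (deriv σ x) x := fun x =>
    ((hσ.differentiable one_ne_zero) x).hasDerivAt
  have hMAN : MA * MA⁻¹ = 1 :=
    Matrix.mul_nonsing_inv MA ((Matrix.isUnit_iff_isUnit_det MA).1 hMApos.isUnit)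
  have hMbN : Mb * Mb⁻¹ = 1 :=
    Matrix.mul_nonsing_inv Mb ((Matrix.isUnit_iff_isUnit_det Mb).1 hMbpos.isUnit)
  have hNsymm : (MA⁻¹)ᵀ = MA⁻¹ := by rw [Matrix.transpose_nonsing_inv, hMAsymm.eq]
  have hNbsymm : (Mb⁻¹)ᵀ = Mb⁻¹ := by rw [Matrix.transpose_nonsing_inv, hMbsymm.eq]
  set S : ℝ → ℝ := fun u =>
    (1/2) * (∑ j, ∑ k, (p j u ⬝ᵥ MA⁻¹ *ᵥ p k u)
        * ((fun i => σ (q j u i)) ⬝ᵥ (fun i => σ (q k u i))))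
      + (1/2) * (∑ j, ∑ k, (p j u ⬝ᵥ Mb⁻¹ *ᵥ p k u)) with hSdef
  have hRS : ∀ u, (1/2) * Matrix.trace ((A u)ᵀ * MA * A u) + (1/2) * (b u ⬝ᵥ Mb *ᵥ b u)
      = S u := fun u =>
    Requal' MA Mb hNsymm hMAN hMbN (fun j => p j u) (fun j i => σ (q j u i))
      (A u) (b u) (hA u) (hb u)
  have hSderiv : ∀ t ∈ Icc (0:ℝ) T, HasDerivWithinAt S 0 (Icc 0 T) t := by
    intro t ht
    have hFder : ∀ j : Fin K, HasDerivWithinAt (fun u => fun i => σ (q j u i))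
        (fun i => deriv σ (q j t i) * ((A t *ᵥ (fun i => σ (q j t i)) + b t) i))
        (Icc 0 T) t := by
      intro j
      rw [hasDerivWithinAt_pi]
      intro i
      have hqi := (hasDerivWithinAt_pi.1 (hq j t ht)) i
      exact (hσd (q j t i)).comp_hasDerivWithinAt t hqi
    have hD := HasDerivWithinAt.add
      (HasDerivWithinAt.const_mul (1/2 : ℝ)
        (HasDerivWithinAt.fun_sum fun j (_ : j ∈ Finset.univ) => HasDerivWithinAt.fun_sum
          fun k (_ : k ∈ Finset.univ) =>
          (hasDerivWithinAt_dot' (hp j t ht) (hasDerivWithinAt_mulVec' MA⁻¹ (hp k t ht))).mul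
            (hasDerivWithinAt_dot' (hFder j) (hFder k))))
      (HasDerivWithinAt.const_mul (1/2 : ℝ)
        (HasDerivWithinAt.fun_sum fun j (_ : j ∈ Finset.univ) => HasDerivWithinAt.fun_sum
          fun k (_ : k ∈ Finset.univ) =>
          hasDerivWithinAt_dot' (hp j t ht) (hasDerivWithinAt_mulVec' Mb⁻¹ (hp k t ht))))
    convert hD using 1
    · rfl
    · rfl
    · rfl
    exact (alg' MA⁻¹ Mb⁻¹ hNsymm hNbsymm (fun j => p j t) (fun j i => σ (q j t i))
      (fun j i => deriv σ (q j t i)) (A t) (b t) (hA t) (hb t)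
      (fun j => -(Matrix.diagonal (fun i => deriv σ (q j t i)) *ᵥ ((A t)ᵀ *ᵥ p j t)))
      (fun j => A t *ᵥ (fun i => σ (q j t i)) + b t)
      (fun j i => deriv σ (q j t i) * ((A t *ᵥ (fun i => σ (q j t i)) + b t) i))
      (fun j => rfl) (fun j => rfl) (fun j => rfl)).symm
  have hcont : ContinuousOn S (Icc 0 T) := fun u hu => (hSderiv u hu).continuousWithinAt
  have hconst := constant_of_has_deriv_right_zero hcont (fun x hx =>
    (hSderiv x (Ico_subset_Icc_self hx)).mono_of_mem_nhdsWithin (Icc_mem_nhdsGE_of_mem hx))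
  intro t ht
  rw [hRS t, hRS 0, hconst t ht]
end

section
/- Consider the linear-quadratic particle shooting system: σ: ℝ → ℝ is continuously differentiable and applied componentwise, M_A and M_b are symmetric positive definite d×d real matrices, and (q_j, p_j): [0,T] → ℝ^d × ℝ^d (j = 1, ..., K) are differentiable curves satisfying q̇_j(t) = A(t) σ(q_j(t)) + b(t) and ṗ_j(t) = − Dσ(q_j(t)) A(t)^⊤ p_j(t), with A(t) = − M_A^{-1} Σ_{j=1}^K p_j(t) σ(q_j(t))^⊤ and b(t) = − M_b^{-1} Σ_{j=1}^K p_j(t). Then the total regularization cost equals its initial value times the time horizon: ∫_0^T [½ Tr(A(t)^⊤ M_A A(t)) + ½ b(t)^⊤ M_b b(t)] dt = T · [½ Tr(A(0)^⊤ M_A A(0)) + ½ b(0)^⊤ M_b b(0)], so the regularization term of the objective is a function of the initial particle conditions (q_j(0), p_j(0)) alone. -/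
open Set Matrix

private lemma sym_swap {d : ℕ} (N : Matrix (Fin d) (Fin d) ℝ) (hN : Nᵀ = N)
    (u v : Fin d → ℝ) :
    ∑ i, ∑ k, u i * (N i k * v k) = ∑ i, ∑ k, v i * (N i k * u k) := by
  rw [Finset.sum_comm]
  refine Finset.sum_congr rfl fun i _ => Finset.sum_congr rfl fun k _ => ?_
  have h : N k i = N i k := by
    conv_lhs => rw [← hN]
    exact Matrix.transpose_apply N k i
  rw [h]; ring

private lemma perj {d : ℕ} (a : Matrix (Fin d) (Fin d) ℝ) (β P S S' : Fin d → ℝ) :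
    (∑ c, ∑ i, ((-(S' i * ∑ k, a k i * P k)) * S c
        + P i * (S' c * ((∑ k, a c k * S k) + β c))) * a i c)
      + ∑ i, (-(S' i * ∑ k, a k i * P k)) * β i = 0 := by
  have haux : ∀ (C : ℝ) (w : Fin d → ℝ) (x : Fin d),
      ∑ c, (C * w c) * a x c = C * ∑ k, a x k * w k := by
    intro C w x
    rw [Finset.mul_sum]
    exact Finset.sum_congr rfl fun c _ => by ring
  have haux2 : ∀ (C : ℝ) (w : Fin d → ℝ) (x : Fin d),
      ∑ i, (w i * C) * a i x = C * ∑ k, a k x * w k := by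
    intro C w x
    rw [Finset.mul_sum]
    exact Finset.sum_congr rfl fun i _ => by ring
  have h1 : (∑ c, ∑ i, ((-(S' i * ∑ k, a k i * P k)) * S c) * a i c)
      = ∑ x, (-(S' x * ∑ k, a k x * P k)) * ∑ k, a x k * S k := by
    rw [Finset.sum_comm]
    exact Finset.sum_congr rfl fun x _ => haux _ S x
  have h2 : (∑ c, ∑ i, (P i * (S' c * ((∑ k, a c k * S k) + β c))) * a i c)
      = ∑ x, (S' x * ((∑ k, a x k * S k) + β x)) * ∑ k, a k x * P k := by
    exact Finset.sum_congr rfl fun x _ => haux2 _ P x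
  simp only [add_mul, Finset.sum_add_distrib]
  rw [h1, h2, ← Finset.sum_add_distrib, ← Finset.sum_add_distrib]
  exact Finset.sum_eq_zero fun x _ => by ring

private lemma sum_comm3 {α β γ M : Type*} [Fintype α] [Fintype β] [Fintype γ] [AddCommMonoid M]
    (f : α → β → γ → M) :
    ∑ c, ∑ i, ∑ j, f c i j = ∑ j, ∑ c, ∑ i, f c i j :=
  calc ∑ c, ∑ i, ∑ j, f c i j
      = ∑ c, ∑ j, ∑ i, f c i j := Finset.sum_congr rfl fun c _ => Finset.sum_comm
    _ = ∑ j, ∑ c, ∑ i, f c i j := Finset.sum_comm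

/-- The total regularization cost of the linear-quadratic particle shooting system equals
its initial value times the time horizon:
`∫₀ᵀ [½ Tr(A(t)ᵀ M_A A(t)) + ½ b(t)ᵀ M_b b(t)] dt
  = T · [½ Tr(A(0)ᵀ M_A A(0)) + ½ b(0)ᵀ M_b b(0)]`,
so the regularization term is a function of the initial particle conditions alone. -/
theorem shooting_regularization_integral
    (d K : ℕ) (σ : ℝ → ℝ) (hσ : ContDiff ℝ 1 σ)
    (T : ℝ) (hT : 0 < T)
    (MA Mb : Matrix (Fin d) (Fin d) ℝ)
    (hMAsymm : MA.IsSymm) (hMApos : MA.PosDef)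
    (hMbsymm : Mb.IsSymm) (hMbpos : Mb.PosDef)
    (q p : Fin K → ℝ → Fin d → ℝ)
    (A : ℝ → Matrix (Fin d) (Fin d) ℝ) (b : ℝ → Fin d → ℝ)
    (hA : ∀ t, A t = -(MA⁻¹ * ∑ j, vecMulVec (p j t) (fun i => σ (q j t i))))
    (hb : ∀ t, b t = -(Mb⁻¹.mulVec (∑ j, p j t)))
    (hq : ∀ j, ∀ t ∈ Icc (0:ℝ) T,
      HasDerivWithinAt (q j) ((A t).mulVec (fun i => σ (q j t i)) + b t) (Icc 0 T) t)
    (hp : ∀ j, ∀ t ∈ Icc (0:ℝ) T,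
      HasDerivWithinAt (p j)
        (-(Matrix.diagonal (fun i => deriv σ (q j t i))).mulVec ((A t)ᵀ.mulVec (p j t)))
        (Icc 0 T) t) :
    ∫ t in (0:ℝ)..T,
        ((1/2) * Matrix.trace ((A t)ᵀ * MA * A t) + (1/2) * (b t ⬝ᵥ Mb.mulVec (b t)))
      = T * ((1/2) * Matrix.trace ((A 0)ᵀ * MA * A 0)
          + (1/2) * (b 0 ⬝ᵥ Mb.mulVec (b 0))) := by
  classical
  have hdetA : IsUnit MA.det := isUnit_iff_ne_zero.2 hMApos.det_pos.ne'
  have hdetb : IsUnit Mb.det := isUnit_iff_ne_zero.2 hMbpos.det_pos.ne'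
  have hinvA : MA⁻¹ * MA = 1 := Matrix.nonsing_inv_mul MA hdetA
  have hinvb : Mb * Mb⁻¹ = 1 := Matrix.mul_nonsing_inv Mb hdetb
  have hNAsymm : (MA⁻¹)ᵀ = MA⁻¹ := by rw [Matrix.transpose_nonsing_inv, hMAsymm.eq]
  have hNbsymm : (Mb⁻¹)ᵀ = Mb⁻¹ := by rw [Matrix.transpose_nonsing_inv, hMbsymm.eq]
  set Φ : ℝ → ℝ := fun τ =>
    (∑ c, ∑ i, ∑ k, (∑ j, p j τ i * σ (q j τ c)) * (MA⁻¹ i k * ∑ j, p j τ k * σ (q j τ c)))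
    + ∑ i, ∑ k, (∑ j, p j τ i) * (Mb⁻¹ i k * ∑ j, p j τ k) with hΦdef
  -- Step A: the integrand equals (1/2) Φ
  have key : ∀ τ : ℝ, (1/2) * Matrix.trace ((A τ)ᵀ * MA * A τ)
      + (1/2) * (b τ ⬝ᵥ Mb.mulVec (b τ)) = (1/2) * Φ τ := by
    intro τ
    set G : Matrix (Fin d) (Fin d) ℝ := ∑ j, vecMulVec (p j τ) (fun i => σ (q j τ i)) with hG
    have hGapp : ∀ i c, G i c = ∑ j, p j τ i * σ (q j τ c) := by
      intro i c
      simp [hG, Matrix.sum_apply, Matrix.vecMulVec_apply]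
    have h1 : (A τ)ᵀ * MA * A τ = Gᵀ * (MA⁻¹ * G) := by
      rw [hA τ]
      rw [Matrix.transpose_neg, Matrix.neg_mul, Matrix.neg_mul, Matrix.mul_neg, neg_neg,
        Matrix.transpose_mul, hNAsymm, Matrix.mul_assoc Gᵀ MA⁻¹ MA, hinvA, Matrix.mul_one]
    have h2 : Matrix.trace (Gᵀ * (MA⁻¹ * G)) = ∑ c, ∑ i, ∑ k, G i c * (MA⁻¹ i k * G k c) := by
      simp only [Matrix.trace, Matrix.diag_apply, Matrix.mul_apply, Matrix.transpose_apply,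
        Finset.mul_sum]
    have h3 : b τ ⬝ᵥ Mb.mulVec (b τ)
        = ∑ i, ∑ k, (∑ j, p j τ i) * (Mb⁻¹ i k * ∑ j, p j τ k) := by
      rw [hb τ]
      rw [Matrix.mulVec_neg, dotProduct_neg, neg_dotProduct, neg_neg,
        Matrix.mulVec_mulVec, hinvb, Matrix.one_mulVec]
      simp only [dotProduct, Matrix.mulVec, Finset.sum_apply]
      refine Finset.sum_congr rfl fun i _ => ?_
      rw [Finset.sum_mul]
      exact Finset.sum_congr rfl fun k _ => by ring
    rw [h1, h2, h3, hΦdef]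
    simp only [hGapp]
    ring
  -- Step B: Φ has derivative zero on [0, T]
  have hΦderiv : ∀ t ∈ Icc (0:ℝ) T, HasDerivWithinAt Φ 0 (Icc 0 T) t := by
    intro t ht
    have hpc : ∀ j i, HasDerivWithinAt (fun τ => p j τ i)
        (-(deriv σ (q j t i) * ∑ k, A t k i * p j t k)) (Icc 0 T) t := by
      intro j i
      have h : HasDerivWithinAt (fun τ => p j τ i) _ (Icc 0 T) t := hasDerivWithinAt_pi.1 (hp j t ht) i
      convert h using 1
      simp [Matrix.mulVec_diagonal, Matrix.mulVec, dotProduct, Matrix.transpose_apply,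
        Finset.mul_sum, mul_assoc]
    have hqc : ∀ j c, HasDerivWithinAt (fun τ => q j τ c)
        ((∑ k, A t c k * σ (q j t k)) + b t c) (Icc 0 T) t := by
      intro j c
      have h : HasDerivWithinAt (fun τ => q j τ c) _ (Icc 0 T) t := hasDerivWithinAt_pi.1 (hq j t ht) c
      convert h using 1
      rfl
    have hσc : ∀ j c, HasDerivWithinAt (fun τ => σ (q j τ c))
        (deriv σ (q j t c) * ((∑ k, A t c k * σ (q j t k)) + b t c)) (Icc 0 T) t := by
      intro j c
      exact ((hσ.differentiable one_ne_zero) (q j t c)).hasDerivAt.comp_hasDerivWithinAt t (hqc j c)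
    set g : Fin d → Fin d → ℝ := fun i c => ∑ j, p j t i * σ (q j t c) with hgdef
    set Dg : Fin d → Fin d → ℝ := fun i c =>
      ∑ j, ((-(deriv σ (q j t i) * ∑ k, A t k i * p j t k)) * σ (q j t c)
        + p j t i * (deriv σ (q j t c) * ((∑ k, A t c k * σ (q j t k)) + b t c))) with hDgdef
    set sv : Fin d → ℝ := fun i => ∑ j, p j t i with hsvdef
    set Ds : Fin d → ℝ := fun i => ∑ j, -(deriv σ (q j t i) * ∑ k, A t k i * p j t k) with hDsdef
    have hgd : ∀ i c, HasDerivWithinAt (fun τ => ∑ j, p j τ i * σ (q j τ c)) (Dg i c)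
        (Icc 0 T) t :=
      fun i c => HasDerivWithinAt.fun_sum fun j _ => (hpc j i).mul (hσc j c)
    have hsd : ∀ i, HasDerivWithinAt (fun τ => ∑ j, p j τ i) (Ds i) (Icc 0 T) t :=
      fun i => HasDerivWithinAt.fun_sum fun j _ => hpc j i
    have hD : HasDerivWithinAt Φ
        ((∑ c, ∑ i, ∑ k, (Dg i c * (MA⁻¹ i k * g k c) + g i c * (MA⁻¹ i k * Dg k c)))
          + ∑ i, ∑ k, (Ds i * (Mb⁻¹ i k * sv k) + sv i * (Mb⁻¹ i k * Ds k)))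
        (Icc 0 T) t := by
      rw [hΦdef]
      refine HasDerivWithinAt.add ?_ ?_
      · exact HasDerivWithinAt.fun_sum fun c _ => HasDerivWithinAt.fun_sum fun i _ =>
          HasDerivWithinAt.fun_sum fun k _ => (hgd i c).mul ((hgd k c).const_mul (MA⁻¹ i k))
      · exact HasDerivWithinAt.fun_sum fun i _ => HasDerivWithinAt.fun_sum fun k _ =>
          (hsd i).mul ((hsd k).const_mul (Mb⁻¹ i k))
    have fact1 : ∀ i c, (∑ k, MA⁻¹ i k * g k c) = -(A t i c) := by
      intro i c
      rw [hA t]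
      simp [hgdef, Matrix.neg_apply, Matrix.mul_apply, Matrix.sum_apply,
        Matrix.vecMulVec_apply]
    have fact2 : ∀ i, (∑ k, Mb⁻¹ i k * sv k) = -(b t i) := by
      intro i
      rw [hb t]
      simp [hsvdef, Matrix.mulVec, dotProduct, Finset.sum_apply]
    have e1 : ∑ c, ∑ i, ∑ k, g i c * (MA⁻¹ i k * Dg k c)
        = ∑ c, ∑ i, ∑ k, Dg i c * (MA⁻¹ i k * g k c) :=
      Finset.sum_congr rfl fun c _ =>
        sym_swap MA⁻¹ hNAsymm (fun i => g i c) (fun k => Dg k c)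
    have e2 : ∑ i, ∑ k, sv i * (Mb⁻¹ i k * Ds k) = ∑ i, ∑ k, Ds i * (Mb⁻¹ i k * sv k) :=
      sym_swap Mb⁻¹ hNbsymm sv Ds
    have c1 : ∑ c, ∑ i, ∑ k, Dg i c * (MA⁻¹ i k * g k c)
        = ∑ c, ∑ i, Dg i c * (-(A t i c)) :=
      Finset.sum_congr rfl fun c _ => Finset.sum_congr rfl fun i _ => by
        rw [← Finset.mul_sum, fact1]
    have c2 : ∑ i, ∑ k, Ds i * (Mb⁻¹ i k * sv k) = ∑ i, Ds i * (-(b t i)) :=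
      Finset.sum_congr rfl fun i _ => by rw [← Finset.mul_sum, fact2]
    have main : (∑ c, ∑ i, Dg i c * A t i c) + ∑ i, Ds i * b t i = 0 := by
      have swapj1 : ∑ c, ∑ i, Dg i c * A t i c
          = ∑ j, ∑ c, ∑ i, ((-(deriv σ (q j t i) * ∑ k, A t k i * p j t k)) * σ (q j t c)
            + p j t i * (deriv σ (q j t c) * ((∑ k, A t c k * σ (q j t k)) + b t c)))
              * A t i c := by
        simp only [hDgdef, Finset.sum_mul]
        exact sum_comm3 _
      have swapj2 : ∑ i, Ds i * b t i
          = ∑ j, ∑ i, (-(deriv σ (q j t i) * ∑ k, A t k i * p j t k)) * b t i := by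
        simp only [hDsdef, Finset.sum_mul]
        exact Finset.sum_comm
      rw [swapj1, swapj2, ← Finset.sum_add_distrib]
      exact Finset.sum_eq_zero fun j _ =>
        perj (A t) (b t) (p j t) (fun c => σ (q j t c)) (fun i => deriv σ (q j t i))
    have hD0 : (∑ c, ∑ i, ∑ k, (Dg i c * (MA⁻¹ i k * g k c) + g i c * (MA⁻¹ i k * Dg k c)))
          + ∑ i, ∑ k, (Ds i * (Mb⁻¹ i k * sv k) + sv i * (Mb⁻¹ i k * Ds k)) = 0 := by
      simp only [Finset.sum_add_distrib]
      rw [e1, e2, c1, c2]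
      have q1 : ∑ c, ∑ i, Dg i c * (-(A t i c)) = -(∑ c, ∑ i, Dg i c * A t i c) := by
        simp [mul_neg, Finset.sum_neg_distrib]
      have q2 : ∑ i, Ds i * (-(b t i)) = -(∑ i, Ds i * b t i) := by
        simp [mul_neg, Finset.sum_neg_distrib]
      rw [q1, q2]
      linarith [main]
    exact hD0 ▸ hD
  -- Step C: Φ is constant on [0, T]
  have hcont : ContinuousOn Φ (Icc 0 T) := fun x hx =>
    (hΦderiv x hx).differentiableWithinAt.continuousWithinAt
  have hconst : ∀ x ∈ Icc (0:ℝ) T, Φ x = Φ 0 :=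
    constant_of_has_deriv_right_zero hcont fun y hy =>
      (hΦderiv y (Ico_subset_Icc_self hy)).mono_of_mem_nhdsWithin (Icc_mem_nhdsGE_of_mem hy)
  -- conclude
  have heq : EqOn (fun t => (1/2) * Matrix.trace ((A t)ᵀ * MA * A t)
      + (1/2) * (b t ⬝ᵥ Mb.mulVec (b t))) (fun _ : ℝ => (1/2) * Φ 0) (uIcc 0 T) := by
    intro x hx
    rw [uIcc_of_le hT.le] at hx
    simp only
    rw [key x, hconst x hx]
  rw [intervalIntegral.integral_congr heq, intervalIntegral.integral_const, key 0]
  simp [smul_eq_mul]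
end
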